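/- arXiv:1208.5139 — 5 statements merged into one kernel-verified Lean document; each statement's English description precedes it below -/
import Mathlib

section
/- The linear isomorphism φ_k : D_k → Ser_k preserves multiplication, i.e. φ_k(d_1 d_2) = φ_k(d_1) φ_k(d_2) for all d_1, d_2 ∈ D_k; hence the diagram superalgebra D_k is isomorphic to the Sergeev superalgebra Ser_k as an associative superalgebra. -/
/-!
STATEMENT 1: The linear isomorphism `φ_k : D_k → Ser_k` (sending a `k`-superdiagram
with underlying permutation `σ` and marked edges at top vertices `i_1 < … < i_m` to
`σ c_{i_1} ⋯ c_{i_m}`) preserves the multiplication; hence the diagram superalgebra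
`D_k` is isomorphic to the Sergeev superalgebra `Ser_k`.
-/

noncomputable section

namespace SergeevSW

/-- the adjacent transposition `(i, i+1)` of `Fin k` (0-based) -/
def swapIdx {k : ℕ} (i : ℕ) (h : i + 1 < k) : Equiv.Perm (Fin k) :=
  Equiv.swap ⟨i, Nat.lt_of_succ_lt h⟩ ⟨i + 1, h⟩

/-- generators of the Sergeev superalgebra `Ser_k` -/
inductive SGen (k : ℕ)
  | s (i : ℕ) (h : i + 1 < k)
  | c (i : Fin k)

def σg {k : ℕ} (i : ℕ) (h : i + 1 < k) : FreeAlgebra ℂ (SGen k) :=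
  FreeAlgebra.ι ℂ (SGen.s i h)

def γg {k : ℕ} (i : Fin k) : FreeAlgebra ℂ (SGen k) :=
  FreeAlgebra.ι ℂ (SGen.c i)

/-- defining relations of the Sergeev superalgebra -/
inductive SerRel (k : ℕ) : FreeAlgebra ℂ (SGen k) → FreeAlgebra ℂ (SGen k) → Prop
  | ss (i : ℕ) (h : i + 1 < k) : SerRel k (σg i h * σg i h) 1
  | braid (i : ℕ) (h : i + 1 < k) (h' : i + 2 < k) :
      SerRel k (σg i h * σg (i+1) h' * σg i h) (σg (i+1) h' * σg i h * σg (i+1) h')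
  | scomm (i j : ℕ) (hi : i + 1 < k) (hj : j + 1 < k) (hij : i + 1 < j) :
      SerRel k (σg i hi * σg j hj) (σg j hj * σg i hi)
  | cc (i : Fin k) : SerRel k (γg i * γg i) (-1)
  | canti (i j : Fin k) (hij : i ≠ j) : SerRel k (γg i * γg j) (-(γg j * γg i))
  | scs (i : ℕ) (h : i + 1 < k) :
      SerRel k (σg i h * γg ⟨i, Nat.lt_of_succ_lt h⟩ * σg i h) (γg ⟨i+1, h⟩)
  | sc (i : ℕ) (h : i + 1 < k) (j : Fin k) (h1 : j.val ≠ i) (h2 : j.val ≠ i + 1) :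
      SerRel k (σg i h * γg j) (γg j * σg i h)

/-- the Sergeev superalgebra, presented by generators and relations -/
abbrev Ser (k : ℕ) := RingQuot (SerRel k)

def sg {k : ℕ} (i : ℕ) (h : i + 1 < k) : Ser k :=
  RingQuot.mkAlgHom ℂ (SerRel k) (σg i h)

def cg {k : ℕ} (i : Fin k) : Ser k :=
  RingQuot.mkAlgHom ℂ (SerRel k) (γg i)

/-- A `k`-superdiagram: the underlying permutation `σ` (top vertex `t` is joined to
bottom vertex `σ t`) together with the set of top vertices of the marked edges. -/
abbrev DDiag (k : ℕ) := Equiv.Perm (Fin k) × Finset (Fin k)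

/-- number of inversions (pairs where an earlier entry is strictly bigger), i.e. the
arranging number of a sequence -/
def inversions {k : ℕ} : List (Fin k) → ℕ
  | [] => 0
  | a :: l => l.countP (fun b => decide (b < a)) + inversions l

/-- increasing enumeration of a finite set of positions -/
def asList {k : ℕ} (A : Finset (Fin k)) : List (Fin k) := A.sort (· ≤ ·)

/-- the sign `(-1)^{ρ(d₁,d₂)+ℓ(d₁,d₂)}` in the product of two `k`-superdiagrams:
`ρ` counts the composite edges made of a marked edge of `d₁` and a marked edge of
`d₂`, and `ℓ` is the arranging number of the sequence `a_1⋯a_p b_1⋯b_q` attached to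
the marked edges. -/
def dSign {k : ℕ} (x y : DDiag k) : ℂ :=
  (-1 : ℂ) ^ ((x.2.image (fun t => y.1⁻¹ t) ∩ y.2).card
    + inversions (((asList x.2).map (fun t => y.1⁻¹ t)) ++ asList y.2))

/-- marked concatenation (placing `x` under `y`): composite permutation and marked
edge set (an edge is marked iff it comes from an odd number of marked edges). -/
def dComp {k : ℕ} (x y : DDiag k) : DDiag k :=
  (x.1 * y.1, symmDiff (x.2.image (fun t => y.1⁻¹ t)) y.2)

/-- the superspace `D_k` with basis the `k`-superdiagrams -/
abbrev Dk (k : ℕ) := DDiag k →₀ ℂ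

/-- the multiplication on `D_k`: `d₁ d₂ = (-1)^{ρ(d₁,d₂)+ℓ(d₁,d₂)} d₁ * d₂` -/
noncomputable instance {k : ℕ} : Mul (Dk k) :=
  ⟨fun f g => f.sum fun x a => g.sum fun y b =>
    Finsupp.single (dComp x y) (a * b * dSign x y)⟩

/-- the ordered product `c_{i_1} ⋯ c_{i_m}` over the increasing enumeration
`i_1 < ⋯ < i_m` of `A` -/
def cProd {k : ℕ} (A : Finset (Fin k)) : Ser k :=
  ((asList A).map (fun i => cg i)).prod

variable {k : ℕ}
open Finset
open scoped List

lemma mul_def (f g : Dk k) : f * g = f.sum fun x a => g.sum fun y b =>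
    Finsupp.single (dComp x y) (a * b * dSign x y) := rfl

lemma single_mul_single (x y : DDiag k) (a b : ℂ) :
    (Finsupp.single x a : Dk k) * Finsupp.single y b
      = Finsupp.single (dComp x y) (a * b * dSign x y) := by
  rw [mul_def]
  rw [Finsupp.sum_single_index (by simp), Finsupp.sum_single_index (by simp)]

lemma zero_mul' (f : Dk k) : (0 : Dk k) * f = 0 := by
  rw [mul_def, Finsupp.sum_zero_index]

lemma mul_zero' (f : Dk k) : f * (0 : Dk k) = 0 := by
  rw [mul_def]; simp [Finsupp.sum_zero_index]

lemma add_mul' (f g h : Dk k) : (f + g) * h = f * h + g * h := by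
  rw [mul_def, mul_def, mul_def, Finsupp.sum_add_index]
  · intro x _; simp
  · intro x _ a b; simp [add_mul, Finsupp.single_add, Finsupp.sum_add]

lemma mul_add' (f g h : Dk k) : f * (g + h) = f * g + f * h := by
  rw [mul_def, mul_def, mul_def, ← Finsupp.sum_add]
  apply Finsupp.sum_congr
  intro x _
  rw [Finsupp.sum_add_index]
  · intro y _; simp
  · intro y _ a b; simp [mul_add, add_mul, Finsupp.single_add]

def fex (j : Fin k) (B : Finset (Fin k)) : ℕ :=
  (if j ∈ B then 1 else 0) + (B.filter (· < j)).card

lemma inversions_nil : inversions ([] : List (Fin k)) = 0 := rfl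
lemma inversions_cons (a : Fin k) (l : List (Fin k)) :
    inversions (a :: l) = l.countP (fun b => decide (b < a)) + inversions l := rfl

lemma inversions_of_sorted {l : List (Fin k)} (h : l.Pairwise (· ≤ ·)) : inversions l = 0 := by
  induction l with
  | nil => rfl
  | cons a l ih =>
    rw [inversions_cons, ih h.of_cons, List.countP_eq_zero.2, Nat.add_zero]
    intro b hb
    simp only [decide_eq_true_eq]
    exact not_lt.2 (List.rel_of_pairwise_cons h hb)

/-- countP over the sorted list of a finset is the card of the filter -/
lemma countP_asList (B : Finset (Fin k)) (p : Fin k → Prop) [DecidablePred p] :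
    (asList B).countP (fun b => decide (p b)) = (B.filter p).card := by
  have h1 : (asList B).countP (fun b => decide (p b))
      = (B.toList).countP (fun b => decide (p b)) :=
    (Finset.sort_perm_toList B _).countP_eq _
  rw [h1, ← Multiset.coe_countP, Finset.coe_toList]
  rw [Finset.card_filter]
  simp [Multiset.countP_eq_card_filter, Finset.filter]


lemma mem_asList {B : Finset (Fin k)} {a : Fin k} : a ∈ asList B ↔ a ∈ B :=
  Finset.mem_sort _

lemma asList_empty : asList (∅ : Finset (Fin k)) = [] := Finset.sort_empty _
lemma asList_singleton (a : Fin k) : asList ({a} : Finset (Fin k)) = [a] :=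
  Finset.sort_singleton _ a

lemma asList_sorted_le (B : Finset (Fin k)) : (asList B).Pairwise (· ≤ ·) := Finset.pairwise_sort _ _
lemma asList_sorted_lt (B : Finset (Fin k)) : (asList B).Pairwise (· < ·) := (Finset.sortedLT_sort B).pairwise
lemma asList_toFinset (B : Finset (Fin k)) : (asList B).toFinset = B := Finset.sort_toFinset _ _

lemma asList_insert_min {a : Fin k} {B : Finset (Fin k)} (h1 : ∀ b ∈ B, a ≤ b) (h2 : a ∉ B) :
    asList (insert a B) = a :: asList B := Finset.sort_insert _ h1 h2

lemma asList_erase (B : Finset (Fin k)) (j : Fin k) :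
    asList (B.erase j) = (asList B).erase j := by
  apply List.Perm.eq_of_pairwise' (asList_sorted_le _)
    (List.Pairwise.sublist List.erase_sublist (asList_sorted_le B))
  calc asList (B.erase j) ~ (B.erase j).toList := Finset.sort_perm_toList _ _
    _ ~ B.toList.erase j := by
        rw [← Multiset.coe_eq_coe, Finset.coe_toList, ← Multiset.coe_erase,
          Finset.coe_toList, Finset.erase_val]
    _ ~ (asList B).erase j := ((Finset.sort_perm_toList B _).symm.erase _)

lemma asList_insert_ordered {B : Finset (Fin k)} {j : Fin k} (hj : j ∉ B) :
    asList (insert j B) = (asList B).orderedInsert (· ≤ ·) j := by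
  apply List.Perm.eq_of_pairwise' (asList_sorted_le _)
    (List.Pairwise.orderedInsert j _ (asList_sorted_le B))
  calc asList (insert j B) ~ (insert j B).toList := Finset.sort_perm_toList _ _
    _ ~ j :: B.toList := by
        rw [← Multiset.coe_eq_coe, Finset.coe_toList, ← Multiset.cons_coe,
          Finset.coe_toList, Finset.insert_val_of_notMem hj]
    _ ~ (asList B).orderedInsert (· ≤ ·) j :=
        ((List.perm_orderedInsert _ j _).trans ((Finset.sort_perm_toList B _).cons j)).symm

lemma filter_symmDiff' (p : Fin k → Prop) [DecidablePred p] (X Y : Finset (Fin k)) :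
    (symmDiff X Y).filter p = symmDiff (X.filter p) (Y.filter p) := by
  ext c; simp [Finset.mem_symmDiff, Finset.mem_filter]; tauto

lemma card_symmDiff_add (X Y : Finset (Fin k)) :
    (symmDiff X Y).card + 2 * (X ∩ Y).card = X.card + Y.card := by
  have hd : symmDiff X Y = (X \ Y) ∪ (Y \ X) := by
    rw [symmDiff_def, Finset.sup_eq_union]
  have h1 : (symmDiff X Y).card = (X \ Y).card + (Y \ X).card := by
    rw [hd]
    exact Finset.card_union_of_disjoint (disjoint_sdiff_sdiff)
  have h2 := Finset.card_sdiff_add_card_inter X Y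
  have h3 := Finset.card_sdiff_add_card_inter Y X
  rw [Finset.inter_comm Y X] at h3
  omega

lemma symmDiff_singleton_mem {j : Fin k} {B : Finset (Fin k)} (h : j ∈ B) :
    symmDiff {j} B = B.erase j := by
  ext c; simp [Finset.mem_symmDiff, Finset.mem_erase]
  constructor
  · rintro (⟨rfl, hc⟩ | ⟨h1, h2⟩); · exact absurd h hc
    exact ⟨h2, h1⟩
  · rintro ⟨h1, h2⟩; exact Or.inr ⟨h2, h1⟩

lemma symmDiff_singleton_not_mem {j : Fin k} {B : Finset (Fin k)} (h : j ∉ B) :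
    symmDiff {j} B = insert j B := by
  ext c; simp [Finset.mem_symmDiff, Finset.mem_insert]
  constructor
  · rintro (⟨rfl, _⟩ | ⟨h1, _⟩); · exact Or.inl rfl
    · exact Or.inr h1
  · rintro (rfl | hc); · exact Or.inl ⟨rfl, h⟩
    · exact Or.inr ⟨hc, fun hx => (hx ▸ h) hc⟩

lemma symmDiff_empty (B : Finset (Fin k)) : symmDiff (∅ : Finset (Fin k)) B = B := by
  ext c; simp [Finset.mem_symmDiff]

lemma symmDiff_empty_right (B : Finset (Fin k)) : symmDiff B (∅ : Finset (Fin k)) = B := by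
  ext c; simp [Finset.mem_symmDiff]

lemma neg_pow_parity {m n : ℕ} (h : m % 2 = n % 2) : ((-1 : ℂ)^m) = (-1)^n := by
  rw [neg_one_pow_eq_pow_mod_two, h, ← neg_one_pow_eq_pow_mod_two]

-- dSign only depends on the marking of the first diagram
lemma dSign_fst (σ τ : Equiv.Perm (Fin k)) (A : Finset (Fin k)) (y : DDiag k) :
    dSign (σ, A) y = dSign (τ, A) y := rfl

lemma dComp_perm (σ : Equiv.Perm (Fin k)) (y : DDiag k) :
    dComp (σ, (∅ : Finset (Fin k))) y = (σ * y.1, y.2) := by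
  simp [dComp, symmDiff_empty]

lemma dSign_perm (σ : Equiv.Perm (Fin k)) (y : DDiag k) :
    dSign (σ, (∅ : Finset (Fin k))) y = 1 := by
  simp [dSign, asList_empty, inversions_of_sorted (asList_sorted_le y.2)]

lemma dComp_c (i : Fin k) (y : DDiag k) :
    dComp ((1 : Equiv.Perm (Fin k)), {i}) y = (y.1, symmDiff {y.1⁻¹ i} y.2) := by
  simp [dComp]

lemma dSign_c (i : Fin k) (y : DDiag k) :
    dSign ((1 : Equiv.Perm (Fin k)), {i}) y = (-1)^(fex (y.1⁻¹ i) y.2) := by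
  have h1 : ({i} : Finset (Fin k)).image (fun t => y.1⁻¹ t) = {y.1⁻¹ i} :=
    Finset.image_singleton _ _
  have h2 : ({y.1⁻¹ i} ∩ y.2).card = if y.1⁻¹ i ∈ y.2 then 1 else 0 := by
    split_ifs with h
    · rw [Finset.singleton_inter_of_mem h, Finset.card_singleton]
    · rw [Finset.singleton_inter_of_notMem h, Finset.card_empty]
  rw [dSign, h1, h2, asList_singleton, List.map_singleton, List.singleton_append,
    inversions_cons, inversions_of_sorted (asList_sorted_le y.2),
    countP_asList y.2 (· < y.1⁻¹ i), fex, Nat.add_zero]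

lemma dComp_unit_right (x : DDiag k) : dComp x ((1 : Equiv.Perm (Fin k)), ∅) = x := by
  have : (fun t => ((1 : Equiv.Perm (Fin k)))⁻¹ t) = id := by
    funext t; simp
  simp [dComp, this, symmDiff_empty_right]

lemma dSign_unit_right (x : DDiag k) : dSign x ((1 : Equiv.Perm (Fin k)), ∅) = 1 := by
  have : (fun t => ((1 : Equiv.Perm (Fin k)))⁻¹ t) = id := by
    funext t; simp
  simp [dSign, this, asList_empty, inversions_of_sorted (asList_sorted_le x.2)]

lemma dComp_unit_left (y : DDiag k) : dComp ((1 : Equiv.Perm (Fin k)), ∅) y = y := by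
  simp [dComp, symmDiff_empty]

lemma dSign_unit_left (y : DDiag k) : dSign ((1 : Equiv.Perm (Fin k)), ∅) y = 1 :=
  dSign_perm 1 y

/-- left multiplication by a basis diagram, as a linear endomorphism -/
def lmul (x : DDiag k) : Dk k →ₗ[ℂ] Dk k :=
  Finsupp.lsum ℂ fun y => dSign x y • (Finsupp.lsingle (dComp x y) : ℂ →ₗ[ℂ] Dk k)

lemma lmul_single (x y : DDiag k) (b : ℂ) :
    lmul x (Finsupp.single y b) = Finsupp.single (dComp x y) (dSign x y * b) := by
  simp [lmul, Finsupp.smul_single]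

lemma lmul_eq_mul (x : DDiag k) (f : Dk k) : lmul x f = Finsupp.single x 1 * f := by
  induction f using Finsupp.induction with
  | zero => rw [map_zero, mul_zero']
  | single_add y b f _ _ ih =>
    rw [map_add, mul_add', ih, lmul_single, single_mul_single]
    ring_nf

lemma lmul_perm_mul (σ τ : Equiv.Perm (Fin k)) :
    lmul ((σ, ∅) : DDiag k) ∘ₗ lmul ((τ, ∅) : DDiag k) = lmul ((σ * τ, ∅) : DDiag k) := by
  apply Finsupp.lhom_ext
  intro y b
  simp only [LinearMap.comp_apply, lmul_single, dComp_perm, dSign_perm, one_mul]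
  rw [mul_assoc]

lemma lmul_one : lmul (((1 : Equiv.Perm (Fin k)), ∅) : DDiag k) = LinearMap.id := by
  apply Finsupp.lhom_ext
  intro y b
  simp [lmul_single, dComp_unit_left, dSign_unit_left]

lemma dSign_def (A : Finset (Fin k)) (σ : Equiv.Perm (Fin k)) (B : Finset (Fin k)) :
    dSign ((1 : Equiv.Perm (Fin k)), A) (σ, B)
      = (-1 : ℂ) ^ ((A.image (fun t => σ⁻¹ t) ∩ B).card
          + inversions (((asList A).map (fun t => σ⁻¹ t)) ++ asList B)) := rfl

/-- The key combinatorial identity: peeling off the minimal marked vertex. -/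
lemma dSign_insert_min (σ : Equiv.Perm (Fin k)) (B : Finset (Fin k)) (a : Fin k)
    (T : Finset (Fin k)) (haT : a ∉ T) (hmin : ∀ t ∈ T, a < t) :
    dSign ((1 : Equiv.Perm (Fin k)), insert a T) (σ, B)
      = (-1 : ℂ)^(fex (σ⁻¹ a) (symmDiff (T.image (fun t => σ⁻¹ t)) B))
        * dSign ((1 : Equiv.Perm (Fin k)), T) (σ, B) := by
  classical
  have hinj : Function.Injective (fun t : Fin k => σ⁻¹ t) :=
    fun s t h => σ⁻¹.injective h
  have hsort : asList (insert a T) = a :: asList T :=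
    asList_insert_min (fun b hb => le_of_lt (hmin b hb)) haT
  have hwT : σ⁻¹ a ∉ T.image (fun t => σ⁻¹ t) := by
    simp only [Finset.mem_image]
    rintro ⟨t, ht, hteq⟩
    exact haT ((hinj hteq) ▸ ht)
  -- ρ' = ρ + ind
  have hρ' : ((insert a T).image (fun t => σ⁻¹ t) ∩ B).card
      = (T.image (fun t => σ⁻¹ t) ∩ B).card + (if σ⁻¹ a ∈ B then 1 else 0) := by
    rw [Finset.image_insert]
    by_cases hwB : σ⁻¹ a ∈ B
    · rw [Finset.insert_inter_of_mem hwB, if_pos hwB,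
        Finset.card_insert_of_notMem (fun hc => hwT (Finset.mem_of_mem_inter_left hc))]
    · rw [Finset.insert_inter_of_notMem hwB, if_neg hwB, Nat.add_zero]
  -- ℓ' = q + β + ℓ
  have h1 : ((asList T).map (fun t => σ⁻¹ t)).countP (fun b => decide (b < σ⁻¹ a))
      = (T.filter (fun t => σ⁻¹ t < σ⁻¹ a)).card := by
    rw [List.countP_map]
    exact countP_asList T (fun t => σ⁻¹ t < σ⁻¹ a)
  have h2 : (asList B).countP (fun b => decide (b < σ⁻¹ a))
      = (B.filter (· < σ⁻¹ a)).card := countP_asList B (· < σ⁻¹ a)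
  have hℓ' : inversions (((asList (insert a T)).map (fun t => σ⁻¹ t)) ++ asList B)
      = (T.filter (fun t => σ⁻¹ t < σ⁻¹ a)).card + (B.filter (· < σ⁻¹ a)).card
        + inversions (((asList T).map (fun t => σ⁻¹ t)) ++ asList B) := by
    rw [hsort, List.map_cons, List.cons_append, inversions_cons, List.countP_append, h1, h2]
  -- q' = q
  have hq' : ((T.image (fun t => σ⁻¹ t)).filter (· < σ⁻¹ a)).card
      = (T.filter (fun t => σ⁻¹ t < σ⁻¹ a)).card := by
    rw [Finset.filter_image, Finset.card_image_of_injective _ hinj]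
  -- fex of the symmetric difference
  have hmem : (if σ⁻¹ a ∈ symmDiff (T.image (fun t => σ⁻¹ t)) B then 1 else 0)
      = (if σ⁻¹ a ∈ B then 1 else 0) := by
    by_cases hwB : σ⁻¹ a ∈ B
    · rw [if_pos hwB, if_pos (Finset.mem_symmDiff.2 (Or.inr ⟨hwB, hwT⟩))]
    · rw [if_neg hwB, if_neg]
      rw [Finset.mem_symmDiff]
      push_neg
      exact ⟨fun h => absurd h hwT, fun h => absurd h hwB⟩
  have hcs := card_symmDiff_add ((T.image (fun t => σ⁻¹ t)).filter (· < σ⁻¹ a))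
    (B.filter (· < σ⁻¹ a))
  have hfil : (symmDiff (T.image (fun t => σ⁻¹ t)) B).filter (· < σ⁻¹ a)
      = symmDiff ((T.image (fun t => σ⁻¹ t)).filter (· < σ⁻¹ a)) (B.filter (· < σ⁻¹ a)) :=
    filter_symmDiff' _ _ _
  have hfex : fex (σ⁻¹ a) (symmDiff (T.image (fun t => σ⁻¹ t)) B)
      + 2 * (((T.image (fun t => σ⁻¹ t)).filter (· < σ⁻¹ a)) ∩ (B.filter (· < σ⁻¹ a))).card
      = (if σ⁻¹ a ∈ B then 1 else 0) + ((T.filter (fun t => σ⁻¹ t < σ⁻¹ a)).card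
          + (B.filter (· < σ⁻¹ a)).card) := by
    rw [fex, hfil, hmem]
    omega
  rw [dSign_def, dSign_def, ← pow_add]
  apply neg_pow_parity
  rw [hρ', hℓ']
  omega

/-! ### fex toggle lemmas -/

lemma fex_toggle_self (j : Fin k) (B : Finset (Fin k)) :
    fex j (symmDiff {j} B) + fex j B = 1 + 2 * (B.filter (· < j)).card := by
  have hfil : (symmDiff {j} B).filter (· < j) = B.filter (· < j) := by
    ext c
    simp only [Finset.mem_filter, Finset.mem_symmDiff, Finset.mem_singleton]
    constructor
    · rintro ⟨h1 | h2, hc⟩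
      · exact absurd hc (h1.1 ▸ lt_irrefl _)
      · exact ⟨h2.1, hc⟩
    · rintro ⟨hc, hlt⟩
      exact ⟨Or.inr ⟨hc, fun he => absurd hlt (he ▸ lt_irrefl _)⟩, hlt⟩
  have hmem : (if j ∈ symmDiff {j} B then 1 else 0) + (if j ∈ B then 1 else 0) = 1 := by
    by_cases hj : j ∈ B
    · rw [if_pos hj, if_neg]
      simp [Finset.mem_symmDiff, hj]
    · rw [if_neg hj, if_pos]
      simp [Finset.mem_symmDiff, hj]
  rw [fex, fex, hfil]
  omega

lemma fex_toggle_other {u v : Fin k} (huv : u ≠ v) (B : Finset (Fin k)) :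
    (fex u (symmDiff {v} B) + fex u B) % 2 = (if v < u then 1 else 0) % 2 := by
  have hmem : (if u ∈ symmDiff {v} B then 1 else 0) = (if u ∈ B then 1 else 0) := by
    by_cases hu : u ∈ B
    · rw [if_pos hu, if_pos]
      simp [Finset.mem_symmDiff, hu, huv]
    · rw [if_neg hu, if_neg]
      simp [Finset.mem_symmDiff, hu, huv]
  have hfil : (symmDiff {v} B).filter (· < u)
      = symmDiff (({v} : Finset (Fin k)).filter (· < u)) (B.filter (· < u)) :=
    filter_symmDiff' _ _ _
  have hcs := card_symmDiff_add (({v} : Finset (Fin k)).filter (· < u)) (B.filter (· < u))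
  have hsing : (({v} : Finset (Fin k)).filter (· < u)).card = if v < u then 1 else 0 := by
    rw [Finset.filter_singleton]
    split_ifs <;> simp
  rw [fex, fex, hmem, hfil]
  omega

/-! ### permutation lemmas -/

lemma swapIdx_mul_self (i : ℕ) (h : i + 1 < k) : swapIdx i h * swapIdx i h = 1 :=
  Equiv.swap_mul_self _ _

lemma swapIdx_inv (i : ℕ) (h : i + 1 < k) : (swapIdx i h)⁻¹ = swapIdx i h :=
  Equiv.swap_inv _ _

lemma swap_commute' {a b c d : Fin k} (h1 : a ≠ c) (h2 : a ≠ d) (h3 : b ≠ c) (h4 : b ≠ d) :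
    Equiv.swap c d * Equiv.swap a b = Equiv.swap a b * Equiv.swap c d := by
  have h := Equiv.swap_apply_apply (Equiv.swap c d) a b
  rw [Equiv.swap_apply_of_ne_of_ne h1 h2, Equiv.swap_apply_of_ne_of_ne h3 h4] at h
  calc Equiv.swap c d * Equiv.swap a b
      = (Equiv.swap c d * Equiv.swap a b * (Equiv.swap c d)⁻¹) * Equiv.swap c d := by group
    _ = Equiv.swap a b * Equiv.swap c d := by rw [← h]

lemma braid_swap {a b c : Fin k} (hab : a ≠ b) (hac : a ≠ c) (hbc : b ≠ c) :
    Equiv.swap a b * Equiv.swap b c * Equiv.swap a b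
      = Equiv.swap b c * Equiv.swap a b * Equiv.swap b c := by
  have h1 : Equiv.swap a b * Equiv.swap b c * Equiv.swap a b = Equiv.swap a c := by
    rw [Equiv.swap_comm a b, Equiv.swap_comm b c]
    rw [Equiv.swap_mul_swap_mul_swap hbc.symm (Ne.symm hac)]
  have h2 : Equiv.swap b c * Equiv.swap a b * Equiv.swap b c = Equiv.swap c a :=
    Equiv.swap_mul_swap_mul_swap hab hac
  rw [h1, h2, Equiv.swap_comm]

lemma braid_perm (i : ℕ) (h : i + 1 < k) (h' : i + 2 < k) :
    swapIdx i h * swapIdx (i+1) h' * swapIdx i h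
      = swapIdx (i+1) h' * swapIdx i h * swapIdx (i+1) h' := by
  have e1 : (⟨i, Nat.lt_of_succ_lt h⟩ : Fin k) ≠ ⟨i+1, h⟩ := by simp [Fin.ext_iff]
  have e2 : (⟨i, Nat.lt_of_succ_lt h⟩ : Fin k) ≠ ⟨i+2, h'⟩ := by simp [Fin.ext_iff]
  have e3 : (⟨i+1, h⟩ : Fin k) ≠ ⟨i+2, h'⟩ := by simp [Fin.ext_iff]
  exact braid_swap e1 e2 e3

/-! ### action of the generators -/

lemma lmul_sw_single (σ : Equiv.Perm (Fin k)) (y : DDiag k) (b : ℂ) :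
    lmul ((σ, ∅) : DDiag k) (Finsupp.single y b) = Finsupp.single (σ * y.1, y.2) b := by
  rw [lmul_single, dComp_perm, dSign_perm, one_mul]

lemma lmul_c_single (i : Fin k) (y : DDiag k) (b : ℂ) :
    lmul (((1 : Equiv.Perm (Fin k)), {i}) : DDiag k) (Finsupp.single y b)
      = Finsupp.single (y.1, symmDiff {y.1⁻¹ i} y.2) ((-1)^(fex (y.1⁻¹ i) y.2) * b) := by
  rw [lmul_single, dComp_c, dSign_c]

def gensE : SGen k → Module.End ℂ (Dk k)
  | .s i h => lmul ((swapIdx i h, ∅) : DDiag k)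
  | .c i => lmul (((1 : Equiv.Perm (Fin k)), {i}) : DDiag k)

def Fr : FreeAlgebra ℂ (SGen k) →ₐ[ℂ] Module.End ℂ (Dk k) := FreeAlgebra.lift ℂ gensE

lemma Fr_σ (i : ℕ) (h : i + 1 < k) : Fr (σg i h) = lmul ((swapIdx i h, ∅) : DDiag k) := by
  rw [σg, Fr, FreeAlgebra.lift_ι_apply]; rfl

lemma Fr_γ (i : Fin k) : Fr (γg i) = lmul (((1 : Equiv.Perm (Fin k)), {i}) : DDiag k) := by
  rw [γg, Fr, FreeAlgebra.lift_ι_apply]; rfl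

theorem Fr_rel : ∀ ⦃a b : FreeAlgebra ℂ (SGen k)⦄, SerRel k a b → Fr a = Fr b := by
  intro a b hrel
  induction hrel with
  | ss i h =>
    rw [map_mul, map_one, Fr_σ]
    apply Finsupp.lhom_ext
    intro y b
    rw [Module.End.mul_apply, lmul_sw_single, lmul_sw_single, Module.End.one_apply]
    dsimp only
    rw [← mul_assoc, swapIdx_mul_self, one_mul, Prod.mk.eta]
  | braid i h h' =>
    rw [map_mul, map_mul, map_mul, map_mul, Fr_σ, Fr_σ]
    apply Finsupp.lhom_ext
    intro y b
    simp only [Module.End.mul_apply, lmul_sw_single]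
    have hp : swapIdx i h * (swapIdx (i+1) h' * (swapIdx i h * y.1))
        = swapIdx (i+1) h' * (swapIdx i h * (swapIdx (i+1) h' * y.1)) := by
      simp only [← mul_assoc]
      rw [braid_perm]
    rw [hp]
  | scomm i j hi hj hij =>
    rw [map_mul, map_mul, Fr_σ, Fr_σ]
    apply Finsupp.lhom_ext
    intro y b
    simp only [Module.End.mul_apply, lmul_sw_single]
    have hc : swapIdx i hi * swapIdx j hj = swapIdx j hj * swapIdx i hi := by
      unfold swapIdx
      apply swap_commute' <;> (simp [Fin.ext_iff]; omega)
    have hp : swapIdx i hi * (swapIdx j hj * y.1) = swapIdx j hj * (swapIdx i hi * y.1) := by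
      simp only [← mul_assoc]
      rw [hc]
    rw [hp]
  | cc i =>
    rw [map_mul, map_neg, map_one, Fr_γ]
    apply Finsupp.lhom_ext
    intro y b
    rw [Module.End.mul_apply, lmul_c_single, lmul_c_single, LinearMap.neg_apply,
      Module.End.one_apply]
    dsimp only
    rw [symmDiff_symmDiff_cancel_left, Prod.mk.eta, ← Finsupp.single_neg]
    congr 1
    rw [← mul_assoc, ← pow_add]
    have h := fex_toggle_self (y.1⁻¹ i) y.2
    rw [neg_pow_parity (n := 1) (by omega), pow_one, neg_one_mul]
  | canti i j hij =>
    rw [map_mul, map_neg, map_mul, Fr_γ, Fr_γ]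
    apply Finsupp.lhom_ext
    intro y b
    rw [Module.End.mul_apply, LinearMap.neg_apply, Module.End.mul_apply,
      lmul_c_single, lmul_c_single, lmul_c_single, lmul_c_single, ← Finsupp.single_neg]
    dsimp only
    have hne : y.1⁻¹ i ≠ y.1⁻¹ j := fun hc => hij (y.1⁻¹.injective hc)
    rw [symmDiff_left_comm]
    congr 1
    rw [← mul_assoc, ← pow_add, ← mul_assoc, ← neg_mul, ← pow_add]
    have h1 := fex_toggle_other hne y.2
    have h2 := fex_toggle_other hne.symm y.2
    have h3 : (if y.1⁻¹ j < y.1⁻¹ i then 1 else 0) + (if y.1⁻¹ i < y.1⁻¹ j then 1 else 0) = 1 := by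
      rcases lt_trichotomy (y.1⁻¹ i) (y.1⁻¹ j) with h | h | h
      · rw [if_neg (not_lt.2 (le_of_lt h)), if_pos h]
      · exact absurd h hne
      · rw [if_pos h, if_neg (not_lt.2 (le_of_lt h))]
    have : (-1 : ℂ) ^ (fex (y.1⁻¹ i) (symmDiff {y.1⁻¹ j} y.2) + fex (y.1⁻¹ j) y.2)
        = (-1) ^ (1 + (fex (y.1⁻¹ j) (symmDiff {y.1⁻¹ i} y.2) + fex (y.1⁻¹ i) y.2)) := by
      apply neg_pow_parity
      omega
    rw [this, pow_add, pow_one, neg_one_mul]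
  | scs i h =>
    rw [map_mul, map_mul, Fr_σ, Fr_γ, Fr_γ]
    apply Finsupp.lhom_ext
    intro y b
    simp only [Module.End.mul_apply, lmul_sw_single, lmul_c_single]
    have hp : swapIdx i h * (swapIdx i h * y.1) = y.1 := by
      rw [← mul_assoc, swapIdx_mul_self, one_mul]
    have hj : (swapIdx i h * y.1)⁻¹ ⟨i, Nat.lt_of_succ_lt h⟩ = y.1⁻¹ ⟨i+1, h⟩ := by
      rw [mul_inv_rev, Equiv.Perm.mul_apply, swapIdx_inv]
      rw [show swapIdx i h ⟨i, Nat.lt_of_succ_lt h⟩ = ⟨i+1, h⟩ from Equiv.swap_apply_left _ _]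
    rw [hp, hj]
  | sc i h j h1 h2 =>
    rw [map_mul, map_mul, Fr_σ, Fr_γ]
    apply Finsupp.lhom_ext
    intro y b
    simp only [Module.End.mul_apply, lmul_sw_single, lmul_c_single]
    have hj : (swapIdx i h * y.1)⁻¹ j = y.1⁻¹ j := by
      rw [mul_inv_rev, Equiv.Perm.mul_apply, swapIdx_inv]
      rw [show swapIdx i h j = j from Equiv.swap_apply_of_ne_of_ne
        (fun hc => h1 (by rw [hc])) (fun hc => h2 (by rw [hc]))]
    rw [hj]

/-- the (left regular) representation of `Ser k` on `D_k` -/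
def ML : Ser k →ₐ[ℂ] Module.End ℂ (Dk k) :=
  RingQuot.liftAlgHom ℂ ⟨Fr, Fr_rel⟩

lemma ML_sg (i : ℕ) (h : i + 1 < k) : ML (sg i h) = lmul ((swapIdx i h, ∅) : DDiag k) := by
  rw [ML, sg, RingQuot.liftAlgHom_mkAlgHom_apply, Fr_σ]

lemma ML_cg (i : Fin k) : ML (cg i) = lmul (((1 : Equiv.Perm (Fin k)), {i}) : DDiag k) := by
  rw [ML, cg, RingQuot.liftAlgHom_mkAlgHom_apply, Fr_γ]

/-! ### derived relations in `Ser k` -/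

lemma sg_mul_self (i : ℕ) (h : i + 1 < k) : sg i h * sg i h = 1 := by
  have := RingQuot.mkAlgHom_rel ℂ (SerRel.ss i h)
  rwa [map_mul, map_one] at this

lemma cg_mul_self (i : Fin k) : cg i * cg i = -1 := by
  have := RingQuot.mkAlgHom_rel ℂ (SerRel.cc i)
  rwa [map_mul, map_neg, map_one] at this

lemma cg_anticomm {i j : Fin k} (hij : i ≠ j) : cg i * cg j = -(cg j * cg i) := by
  have := RingQuot.mkAlgHom_rel ℂ (SerRel.canti i j hij)
  rwa [map_mul, map_neg, map_mul] at this

lemma sg_cg_sg (i : ℕ) (h : i + 1 < k) :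
    sg i h * cg ⟨i, Nat.lt_of_succ_lt h⟩ * sg i h = cg ⟨i+1, h⟩ := by
  have := RingQuot.mkAlgHom_rel ℂ (SerRel.scs i h)
  rwa [map_mul, map_mul] at this

lemma sg_cg_comm (i : ℕ) (h : i + 1 < k) (j : Fin k) (h1 : j.val ≠ i) (h2 : j.val ≠ i + 1) :
    sg i h * cg j = cg j * sg i h := by
  have := RingQuot.mkAlgHom_rel ℂ (SerRel.sc i h j h1 h2)
  rwa [map_mul, map_mul] at this

/-- commuting a Clifford generator past an adjacent transposition -/
lemma cg_sg (i : ℕ) (h : i + 1 < k) (j : Fin k) :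
    cg j * sg i h = sg i h * cg (swapIdx i h j) := by
  by_cases hji : j = ⟨i, Nat.lt_of_succ_lt h⟩
  · subst hji
    have hsw : swapIdx i h ⟨i, Nat.lt_of_succ_lt h⟩ = ⟨i+1, h⟩ := Equiv.swap_apply_left _ _
    rw [hsw]
    have := sg_cg_sg i h
    calc cg ⟨i, Nat.lt_of_succ_lt h⟩ * sg i h
        = (sg i h * sg i h) * (cg ⟨i, Nat.lt_of_succ_lt h⟩ * sg i h) := by
          rw [sg_mul_self, one_mul]
      _ = sg i h * (sg i h * cg ⟨i, Nat.lt_of_succ_lt h⟩ * sg i h) := by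
          simp only [mul_assoc]
      _ = sg i h * cg ⟨i+1, h⟩ := by rw [this]
  · by_cases hji1 : j = ⟨i+1, h⟩
    · subst hji1
      have hsw : swapIdx i h ⟨i+1, h⟩ = ⟨i, Nat.lt_of_succ_lt h⟩ := Equiv.swap_apply_right _ _
      rw [hsw]
      have := sg_cg_sg i h
      calc cg ⟨i+1, h⟩ * sg i h
          = (sg i h * cg ⟨i, Nat.lt_of_succ_lt h⟩ * sg i h) * sg i h := by rw [this]
        _ = sg i h * cg ⟨i, Nat.lt_of_succ_lt h⟩ * (sg i h * sg i h) := by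
            simp only [mul_assoc]
        _ = sg i h * cg ⟨i, Nat.lt_of_succ_lt h⟩ := by rw [sg_mul_self, mul_one]
    · have h1 : j.val ≠ i := fun hc => hji (Fin.ext hc)
      have h2 : j.val ≠ i + 1 := fun hc => hji1 (Fin.ext hc)
      have hsw : swapIdx i h j = j :=
        Equiv.swap_apply_of_ne_of_ne (fun hc => hji hc) (fun hc => hji1 hc)
      rw [hsw, sg_cg_comm i h j h1 h2]

lemma lmul_one_end : lmul (((1 : Equiv.Perm (Fin k)), ∅) : DDiag k) = (1 : Module.End ℂ (Dk k)) :=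
  lmul_one

lemma ML_S (S : Equiv.Perm (Fin k) →* Ser k)
    (hS : ∀ (i : ℕ) (h : i + 1 < k), S (swapIdx i h) = sg i h) (σ : Equiv.Perm (Fin k)) :
    ML (S σ) = lmul ((σ, ∅) : DDiag k) := by
  cases k with
  | zero =>
    have hσ : σ = 1 := Subsingleton.elim σ 1
    rw [hσ, map_one, map_one, lmul_one_end]
  | succ n =>
    have hmem : σ ∈ Submonoid.closure
        (Set.range fun i : Fin n => Equiv.swap i.castSucc i.succ) := by
      rw [Equiv.Perm.mclosure_swap_castSucc_succ]
      trivial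
    induction hmem using Submonoid.closure_induction with
    | mem x hx =>
      obtain ⟨i, rfl⟩ := hx
      dsimp only
      have hlt : (i : ℕ) + 1 < n + 1 := by omega
      have hsw : Equiv.swap i.castSucc i.succ = swapIdx (i : ℕ) hlt := by
        rw [swapIdx]
        congr 1 <;> exact Fin.ext (by simp)
      rw [hsw, hS, ML_sg]
    | one => rw [map_one, map_one, lmul_one_end]
    | mul x y hx hy ihx ihy =>
      rw [map_mul, map_mul, ihx, ihy]
      show lmul ((x, ∅) : DDiag (n+1)) ∘ₗ lmul ((y, ∅) : DDiag (n+1)) = _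
      rw [lmul_perm_mul]

lemma cg_S (S : Equiv.Perm (Fin k) →* Ser k)
    (hS : ∀ (i : ℕ) (h : i + 1 < k), S (swapIdx i h) = sg i h) (σ : Equiv.Perm (Fin k))
    (j : Fin k) : cg j * S σ = S σ * cg (σ⁻¹ j) := by
  cases k with
  | zero => exact j.elim0
  | succ n =>
    have hmem : σ ∈ Submonoid.closure
        (Set.range fun i : Fin n => Equiv.swap i.castSucc i.succ) := by
      rw [Equiv.Perm.mclosure_swap_castSucc_succ]
      trivial
    revert j
    induction hmem using Submonoid.closure_induction with
    | mem x hx =>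
      obtain ⟨i, rfl⟩ := hx
      dsimp only
      intro j
      have hlt : (i : ℕ) + 1 < n + 1 := by omega
      have hsw : Equiv.swap i.castSucc i.succ = swapIdx (i : ℕ) hlt := by
        rw [swapIdx]; congr 1 <;> exact Fin.ext (by simp)
      rw [hsw, hS, swapIdx_inv, cg_sg]
    | one =>
      intro j
      rw [map_one, one_mul, mul_one, inv_one, Equiv.Perm.one_apply]
    | mul x y hx hy ihx ihy =>
      intro j
      rw [map_mul, ← mul_assoc, ihx, mul_assoc, ihy, ← mul_assoc, mul_inv_rev,
        Equiv.Perm.mul_apply]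

lemma ML_cProdL (L : List (Fin k)) (hL : L.Pairwise (· < ·)) (σ : Equiv.Perm (Fin k))
    (B : Finset (Fin k)) (b : ℂ) :
    ML ((L.map (fun i => cg i)).prod) (Finsupp.single ((σ, B) : DDiag k) b)
      = Finsupp.single ((σ, symmDiff (L.toFinset.image (fun t => σ⁻¹ t)) B) : DDiag k)
          (dSign ((1 : Equiv.Perm (Fin k)), L.toFinset) ((σ, B) : DDiag k) * b) := by
  induction L with
  | nil =>
    rw [List.map_nil, List.prod_nil, map_one, Module.End.one_apply, List.toFinset_nil,
      Finset.image_empty, symmDiff_empty, dSign_perm, one_mul]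
  | cons a L ih =>
    rw [List.pairwise_cons] at hL
    obtain ⟨ha, hL⟩ := hL
    have haL : a ∉ L := fun hc => lt_irrefl a (ha a hc)
    have haT : a ∉ L.toFinset := fun hc => haL (List.mem_toFinset.1 hc)
    have hmin : ∀ t ∈ L.toFinset, a < t := fun t ht => ha t (List.mem_toFinset.1 ht)
    have hwU : σ⁻¹ a ∉ L.toFinset.image (fun t => σ⁻¹ t) := by
      simp only [Finset.mem_image]
      rintro ⟨t, ht, hteq⟩
      exact haT ((σ⁻¹.injective hteq) ▸ ht)
    rw [List.map_cons, List.prod_cons, map_mul, Module.End.mul_apply, ih hL, ML_cg,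
      lmul_c_single]
    dsimp only
    rw [List.toFinset_cons]
    have hset : symmDiff ((insert a L.toFinset).image (fun t => σ⁻¹ t)) B
        = symmDiff {σ⁻¹ a} (symmDiff (L.toFinset.image (fun t => σ⁻¹ t)) B) := by
      rw [Finset.image_insert, ← symmDiff_singleton_not_mem hwU, symmDiff_assoc]
    rw [hset, dSign_insert_min σ B a L.toFinset haT hmin, mul_assoc]

lemma ML_cProd (A : Finset (Fin k)) (σ : Equiv.Perm (Fin k)) (B : Finset (Fin k)) (b : ℂ) :
    ML (cProd A) (Finsupp.single ((σ, B) : DDiag k) b)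
      = Finsupp.single ((σ, symmDiff (A.image (fun t => σ⁻¹ t)) B) : DDiag k)
          (dSign ((1 : Equiv.Perm (Fin k)), A) ((σ, B) : DDiag k) * b) := by
  have h := ML_cProdL (asList A) (asList_sorted_lt A) σ B b
  rw [asList_toFinset] at h
  exact h

lemma neg_smul_ser (c : ℂ) (x : Ser k) : (-c) • x = -(c • x) :=
  @neg_smul ℂ (Ser k) _ inferInstance inferInstance c x

lemma neg_mul_ser (x y : Ser k) : -x * y = -(x * y) := @neg_mul (Ser k) _ inferInstance x y

lemma mul_neg_ser (x y : Ser k) : x * -y = -(x * y) := @mul_neg (Ser k) _ inferInstance x y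

lemma neg_one_smul_ser (x : Ser k) : (-1 : ℂ) • x = -x :=
  @neg_one_smul ℂ (Ser k) _ inferInstance inferInstance x

/-- moving a Clifford generator into an ordered product -/
lemma cg_prodL : ∀ (L : List (Fin k)), L.Pairwise (· < ·) → ∀ j : Fin k,
    cg j * (L.map (fun i => cg i)).prod
      = ((-1 : ℂ)^((if j ∈ L then 1 else 0) + L.countP (fun b => decide (b < j))))
        • (((if j ∈ L then L.erase j else L.orderedInsert (· ≤ ·) j).map (fun i => cg i)).prod) := by
  intro L
  induction L with
  | nil =>
    intro _ j
    simp [List.orderedInsert_nil]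
  | cons a L ih =>
    intro hsort j
    rw [List.pairwise_cons] at hsort
    obtain ⟨ha, hL⟩ := hsort
    rcases lt_trichotomy j a with hja | rfl | haj
    · have hjnot : j ∉ a :: L := by
        intro hc
        rcases List.mem_cons.1 hc with rfl | hc
        · exact lt_irrefl j hja
        · exact lt_irrefl j (lt_trans hja (ha j hc))
      have hcnt : (a :: L).countP (fun b => decide (b < j)) = 0 := by
        rw [List.countP_eq_zero]
        intro b hb
        simp only [decide_eq_true_eq]
        rcases List.mem_cons.1 hb with rfl | hb
        · exact not_lt.2 (le_of_lt hja)
        · exact not_lt.2 (le_of_lt (lt_trans hja (ha b hb)))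
      have hoi : List.orderedInsert (· ≤ ·) j (a :: L) = j :: a :: L :=
        List.orderedInsert_cons_of_le _ _ (le_of_lt hja)
      rw [if_neg hjnot, if_neg hjnot, hcnt, pow_zero, one_smul, hoi]
      simp only [List.map_cons, List.prod_cons]
    · have hmem : j ∈ j :: L := List.mem_cons_self
      have hcnt : (j :: L).countP (fun b => decide (b < j)) = 0 := by
        rw [List.countP_eq_zero]
        intro b hb
        simp only [decide_eq_true_eq]
        rcases List.mem_cons.1 hb with rfl | hb
        · exact lt_irrefl b
        · exact not_lt.2 (le_of_lt (ha b hb))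
      rw [if_pos hmem, if_pos hmem, hcnt, List.erase_cons_head]
      simp only [List.map_cons, List.prod_cons]
      rw [← mul_assoc, cg_mul_self, Nat.add_zero, pow_one, neg_one_smul_ser, neg_mul_ser,
        one_mul]
    · have hne : j ≠ a := ne_of_gt haj
      have h1 : (if j ∈ a :: L then 1 else 0 : ℕ) = (if j ∈ L then 1 else 0) := by
        simp [List.mem_cons, hne]
      have hcnt : (a :: L).countP (fun b => decide (b < j))
          = L.countP (fun b => decide (b < j)) + 1 := by
        rw [List.countP_cons]
        simp [haj]
      have h3 : (if j ∈ a :: L then (a :: L).erase j else (a :: L).orderedInsert (· ≤ ·) j)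
          = a :: (if j ∈ L then L.erase j else L.orderedInsert (· ≤ ·) j) := by
        by_cases hj : j ∈ L
        · rw [if_pos (List.mem_cons.2 (Or.inr hj)), if_pos hj,
            List.erase_cons_tail (not_beq_of_ne hne.symm)]
        · rw [if_neg (fun hc => hj ((List.mem_cons.1 hc).resolve_left hne)), if_neg hj]
          have hle : ¬ (j ≤ a) := not_le.2 haj
          simp [List.orderedInsert, hle]
      rw [h1, hcnt, h3]
      simp only [List.map_cons, List.prod_cons]
      rw [← mul_assoc, cg_anticomm hne, neg_mul_ser, mul_assoc, ih hL j, mul_smul_comm,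
        ← neg_smul_ser,
        show (if j ∈ L then 1 else 0) + (L.countP (fun b => decide (b < j)) + 1)
          = ((if j ∈ L then 1 else 0) + L.countP (fun b => decide (b < j))) + 1 from by omega,
        pow_succ, mul_neg_one]

/-- commuting a Clifford generator into an ordered Clifford monomial -/
lemma cg_cProd (j : Fin k) (B : Finset (Fin k)) :
    cg j * cProd B = ((-1 : ℂ)^(fex j B)) • cProd (symmDiff {j} B) := by
  have h := cg_prodL (asList B) (asList_sorted_lt B) j
  have hmem : (j ∈ asList B) = (j ∈ B) := propext mem_asList
  simp only [hmem, countP_asList B (· < j)] at h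
  show cg j * ((asList B).map (fun i => cg i)).prod = _
  rw [h, fex]
  congr 1
  by_cases hj : j ∈ B
  · rw [if_pos hj, symmDiff_singleton_mem hj]
    show (((asList B).erase j).map (fun i => cg i)).prod = _
    rw [← asList_erase]
    rfl
  · rw [if_neg hj, symmDiff_singleton_not_mem hj]
    show (((asList B).orderedInsert (· ≤ ·) j).map (fun i => cg i)).prod = _
    rw [← asList_insert_ordered hj]
    rfl

lemma cProd_empty : cProd (∅ : Finset (Fin k)) = 1 := by
  rw [cProd, asList_empty, List.map_nil, List.prod_nil]

lemma phi_single (S : Equiv.Perm (Fin k) →* Ser k) (φ : Dk k →ₗ[ℂ] Ser k)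
    (hφ : ∀ x : DDiag k, φ (Finsupp.single x 1) = S x.1 * cProd x.2)
    (y : DDiag k) (b : ℂ) : φ (Finsupp.single y b) = b • (S y.1 * cProd y.2) := by
  have h : (Finsupp.single y b : Dk k) = b • Finsupp.single y 1 := by
    rw [Finsupp.smul_single, smul_eq_mul, mul_one]
  rw [h, map_smul, hφ]

/-- the master lemma: `φ` intertwines the regular representation `ML` with
left multiplication in `Ser k` -/
lemma phi_ML (S : Equiv.Perm (Fin k) →* Ser k)
    (hS : ∀ (i : ℕ) (h : i + 1 < k), S (swapIdx i h) = sg i h)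
    (φ : Dk k →ₗ[ℂ] Ser k)
    (hφ : ∀ x : DDiag k, φ (Finsupp.single x 1) = S x.1 * cProd x.2)
    (a : Ser k) (d : Dk k) : φ (ML a d) = a * φ d := by
  obtain ⟨w, rfl⟩ := RingQuot.mkAlgHom_surjective ℂ (SerRel k) a
  revert d
  induction w using FreeAlgebra.induction with
  | grade0 r =>
    intro d
    rw [AlgHom.commutes, AlgHom.commutes, Module.algebraMap_end_apply, map_smul,
      Algebra.smul_def]
  | grade1 x =>
    cases x with
    | s i h =>
      intro d
      show φ (ML (sg i h) d) = sg i h * φ d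
      induction d using Finsupp.induction with
      | zero => rw [map_zero, map_zero, mul_zero]
      | single_add y b f _ _ ih =>
        rw [map_add, map_add, map_add, mul_add, ih]
        congr 1
        rw [ML_sg, lmul_sw_single, phi_single S φ hφ, phi_single S φ hφ]
        dsimp only
        rw [map_mul, mul_assoc, hS, mul_smul_comm]
    | c i =>
      intro d
      show φ (ML (cg i) d) = cg i * φ d
      induction d using Finsupp.induction with
      | zero => rw [map_zero, map_zero, mul_zero]
      | single_add y b f _ _ ih =>
        rw [map_add, map_add, map_add, mul_add, ih]
        congr 1
        rw [ML_cg, lmul_c_single, phi_single S φ hφ, phi_single S φ hφ]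
        dsimp only
        rw [mul_smul_comm, ← mul_assoc, cg_S S hS, mul_assoc, cg_cProd, mul_smul_comm,
          smul_smul, mul_comm b]
  | mul w1 w2 ih1 ih2 =>
    intro d
    rw [map_mul, map_mul, Module.End.mul_apply, ih1, ih2, mul_assoc]
  | add w1 w2 ih1 ih2 =>
    intro d
    rw [map_add, map_add, LinearMap.add_apply, map_add, add_mul, ih1, ih2]

/-- `ML` of a basis vector's image acts as diagram multiplication -/
lemma ML_phi_single (S : Equiv.Perm (Fin k) →* Ser k)
    (hS : ∀ (i : ℕ) (h : i + 1 < k), S (swapIdx i h) = sg i h)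
    (φ : Dk k →ₗ[ℂ] Ser k)
    (hφ : ∀ x : DDiag k, φ (Finsupp.single x 1) = S x.1 * cProd x.2)
    (x y : DDiag k) (b : ℂ) :
    ML (φ (Finsupp.single x 1)) (Finsupp.single y b)
      = (Finsupp.single x 1 : Dk k) * Finsupp.single y b := by
  rw [hφ, map_mul, Module.End.mul_apply]
  have h1 : ML (cProd x.2) (Finsupp.single y b)
      = Finsupp.single ((y.1, symmDiff (x.2.image (fun t => y.1⁻¹ t)) y.2) : DDiag k)
          (dSign ((1 : Equiv.Perm (Fin k)), x.2) ((y.1, y.2) : DDiag k) * b) :=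
    ML_cProd x.2 y.1 y.2 b
  rw [h1, ML_S S hS, lmul_sw_single]
  rw [single_mul_single]
  show Finsupp.single (x.1 * y.1, symmDiff (Finset.image (fun t => y.1⁻¹ t) x.2) y.2) _ = _
  rw [dComp]
  congr 1
  show dSign ((1 : Equiv.Perm (Fin k)), x.2) y * b = 1 * b * dSign x y
  rw [show dSign ((1 : Equiv.Perm (Fin k)), x.2) y = dSign x y from rfl]
  ring

/-- Theorem 2.3: the linear isomorphism `φ_k : D_k → Ser_k`,
`d ↦ σ c_{i_1}⋯c_{i_m}`, preserves multiplication; hence `D_k ≅ Ser_k` as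
associative superalgebras.  (Here `S` is the canonical embedding of `Σ_k` into
`Ser_k`, determined by sending adjacent transpositions to the generators `s_i`.) -/
theorem diagrammatic_realization_of_Sergeev (k : ℕ)
    (S : Equiv.Perm (Fin k) →* Ser k)
    (hS : ∀ (i : ℕ) (h : i + 1 < k), S (swapIdx i h) = sg i h)
    (φ : Dk k →ₗ[ℂ] Ser k)
    (hφ : ∀ x : DDiag k, φ (Finsupp.single x 1) = S x.1 * cProd x.2) :
    (∀ d1 d2 : Dk k, φ (d1 * d2) = φ d1 * φ d2) ∧ Function.Bijective φ := by
  -- core multiplicativity on basis vectors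
  have hcore1 : ∀ (x y : DDiag k) (b : ℂ),
      φ ((Finsupp.single x 1 : Dk k) * Finsupp.single y b)
        = φ (Finsupp.single x 1) * φ (Finsupp.single y b) := by
    intro x y b
    rw [← ML_phi_single S hS φ hφ x y b, phi_ML S hS φ hφ]
  have hcore : ∀ (x y : DDiag k) (a b : ℂ),
      φ ((Finsupp.single x a : Dk k) * Finsupp.single y b)
        = φ (Finsupp.single x a) * φ (Finsupp.single y b) := by
    intro x y a b
    have h1 : (Finsupp.single x a : Dk k) * Finsupp.single y b
        = a • ((Finsupp.single x 1 : Dk k) * Finsupp.single y b) := by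
      rw [single_mul_single, single_mul_single, Finsupp.smul_single]
      congr 1
      rw [smul_eq_mul]
      ring
    have h2 : (Finsupp.single x a : Dk k) = a • Finsupp.single x 1 := by
      rw [Finsupp.smul_single, smul_eq_mul, mul_one]
    rw [h1, map_smul, hcore1, h2, map_smul, smul_mul_assoc]
  -- multiplicativity against a basis vector
  have hsingle_mul : ∀ (x : DDiag k) (a : ℂ) (d2 : Dk k),
      φ ((Finsupp.single x a : Dk k) * d2) = φ (Finsupp.single x a) * φ d2 := by
    intro x a d2
    induction d2 using Finsupp.induction with
    | zero => rw [mul_zero', map_zero, mul_zero]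
    | single_add y b g _ _ ih2 =>
      rw [mul_add', map_add, map_add, mul_add, ih2, hcore]
  -- full multiplicativity
  have hmul : ∀ d1 d2 : Dk k, φ (d1 * d2) = φ d1 * φ d2 := by
    intro d1 d2
    induction d1 using Finsupp.induction with
    | zero => rw [zero_mul', map_zero, zero_mul]
    | single_add x a f _ _ ih =>
      rw [add_mul', map_add, map_add, add_mul, ih, hsingle_mul]
  refine ⟨hmul, ?_, ?_⟩
  · -- injectivity via the left inverse `a ↦ ML a δ₁`
    have hθφ : ∀ d : Dk k,
        ML (φ d) (Finsupp.single (((1 : Equiv.Perm (Fin k)), ∅) : DDiag k) 1) = d := by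
      intro d
      induction d using Finsupp.induction with
      | zero => rw [map_zero, map_zero, LinearMap.zero_apply]
      | single_add x a f _ _ ih =>
        rw [map_add, map_add, LinearMap.add_apply, ih]
        congr 1
        have h2 : (Finsupp.single x a : Dk k) = a • Finsupp.single x 1 := by
          rw [Finsupp.smul_single, smul_eq_mul, mul_one]
        rw [h2, map_smul, map_smul, LinearMap.smul_apply,
          ML_phi_single S hS φ hφ, single_mul_single, dComp_unit_right, dSign_unit_right,
          Finsupp.smul_single]
        norm_num
    intro d1 d2 h
    rw [← hθφ d1, ← hθφ d2, h]
  · -- surjectivity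
    intro a
    refine ⟨ML a (Finsupp.single (((1 : Equiv.Perm (Fin k)), ∅) : DDiag k) 1), ?_⟩
    rw [phi_ML S hS φ hφ, hφ]
    show a * (S 1 * cProd ∅) = a
    rw [map_one, cProd_empty, one_mul, mul_one]

end SergeevSW
end
end

section
/- For every k-superdiagram d ∈ D_k, the diagrammatic action on V^{⊗k} agrees with the Sergeev action under φ_k: Φ̃_k(d) = Φ_k(φ_k(d)). -/
/-!
STATEMENT 2: For every `k`-superdiagram `d ∈ D_k`, the diagrammatic action on
`V^{⊗k}` agrees with the Sergeev action under `φ_k`:  `Φ̃_k(d) = Φ_k(φ_k(d))`.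
-/

noncomputable section

namespace SergeevSW




/-- Index set `{1,…,n,1̄,…,n̄}` of the standard basis of `V = ℂ^{n|n}`. -/
abbrev BI (n : ℕ) := Fin n ⊕ Fin n

/-- parity of a basis index -/
def par {n : ℕ} : BI n → ZMod 2
  | Sum.inl _ => 0
  | Sum.inr _ => 1

/-- bar involution on indices -/
def bar {n : ℕ} : BI n → BI n
  | Sum.inl i => Sum.inr i
  | Sum.inr i => Sum.inl i

/-- `(-1)^z` for `z : ℤ/2ℤ` -/
def sgn (z : ZMod 2) : ℂ := (-1 : ℂ) ^ z.val

/-- Index tuples for the standard basis of `V^{⊗k}`. -/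
abbrev Tup (n k : ℕ) := Fin k → BI n

/-- total parity of a basis tuple -/
def parT {n k : ℕ} (x : Tup n k) : ZMod 2 := ∑ p, par (x p)

/-- sum of parities of the entries strictly before position `p` -/
def parBelow {n k : ℕ} (x : Tup n k) (p : Fin k) : ZMod 2 :=
  ∑ q ∈ Finset.univ.filter (fun q => q < p), par (x q)

/-- The queer Lie superalgebra `q(n)`, in block matrix form `((A,B),(B,A))`;
these are exactly the matrices supercommuting with the odd involution `P`. -/
def qn (n : ℕ) : Set (Matrix (BI n) (BI n) ℂ) :=
  {M | ∀ i j : Fin n,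
    M (Sum.inl i) (Sum.inl j) = M (Sum.inr i) (Sum.inr j) ∧
    M (Sum.inl i) (Sum.inr j) = M (Sum.inr i) (Sum.inl j)}

/-- a matrix is homogeneous of parity `p` with respect to a grading of the index set -/
def IsHomog {ι : Type} (pr : ι → ZMod 2) (p : ZMod 2) (M : Matrix ι ι ℂ) : Prop :=
  ∀ i j, M i j ≠ 0 → pr i = pr j + p

/-- homogeneous component of parity `p` of a matrix -/
def matComp {ι : Type} (pr : ι → ZMod 2) (p : ZMod 2) (M : Matrix ι ι ℂ) :
    Matrix ι ι ℂ :=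
  fun i j => if pr i = pr j + p then M i j else 0

/-- The diagonal action (with Koszul signs) of an element of `q(n)` on `V^{⊗k}`:
`g·(w_1⊗⋯⊗w_k) = Σ_j ±w_1⊗⋯⊗g w_j⊗⋯⊗w_k`, written as a matrix in the standard
basis of `V^{⊗k}` (rows = output index, columns = input index). -/
def rho (n k : ℕ) (M : Matrix (BI n) (BI n) ℂ) :
    Matrix (Tup n k) (Tup n k) ℂ :=
  fun y x => ∑ p : Fin k,
    if ∀ q, q ≠ p → x q = y q then
      sgn ((par (x p) + par (y p)) * parBelow x p) * M (y p) (x p)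
    else 0

/-- The supercentralizer `End_{q(n)}(V^{⊗k})`: all endomorphisms each of whose
homogeneous components supercommutes with the action of every homogeneous element
of `q(n)`. -/
def SuperCentralizer (n k : ℕ) : Set (Matrix (Tup n k) (Tup n k) ℂ) :=
  {f | ∀ M ∈ qn n, ∀ pg : ZMod 2, IsHomog par pg M → ∀ pf : ZMod 2,
    matComp parT pf f * rho n k M = sgn (pf * pg) • (rho n k M * matComp parT pf f)}

/-- matrix of the (right-)action of the Sergeev generator `s_i` on `V^{⊗k}`:
graded place permutation of the `i`-th and `(i+1)`-th tensor factors. -/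
def Smat (n k : ℕ) (i : ℕ) (h : i + 1 < k) : Matrix (Tup n k) (Tup n k) ℂ :=
  fun y x => if y = x ∘ (swapIdx i h) then
      sgn (par (x ⟨i, Nat.lt_of_succ_lt h⟩) * par (x ⟨i + 1, h⟩))
    else 0

/-- matrix of the (right-)action of the Sergeev generator `c_a` on `V^{⊗k}`:
apply `P` (with `P v_a = (-1)^{|a|+1} v_{ā}`) to the `a`-th factor, with sign
`(-1)^{|w_1|+⋯+|w_{a-1}|}`. -/
def Cmat (n k : ℕ) (a : Fin k) : Matrix (Tup n k) (Tup n k) ℂ :=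
  fun y x => if y = Function.update x a (bar (x a)) then
      sgn (parBelow x a + par (x a) + 1)
    else 0

/-- crossing sign exponent of a labeled `k`-superdiagram: each crossing of two edges
contributes the product of the parities of the bottom labels of the two edges. -/
def crossExpD {n k : ℕ} (σ : Equiv.Perm (Fin k)) (x : Tup n k) : ZMod 2 :=
  ∑ t2 : Fin k, ∑ t1 ∈ Finset.univ.filter (fun t1 => t1 < t2),
    if σ t2 < σ t1 then par (x (σ t1)) * par (x (σ t2)) else 0

/-- sum of parities of the labels at positions `≤ b` -/
def parUpTo {n k : ℕ} (x : Tup n k) (b : Fin k) : ZMod 2 := parBelow x b + par (x b)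

/-- weight `wt(ᵢd_ⱼ)` of a labeled `k`-superdiagram (`i` = bottom labels, `j` = top
labels): product of Kronecker deltas over edges (with bar on marked edges), crossing
signs, and the signs `(-1)^{m(ẽ)}` attached to the marked edges. -/
def wtD {n k : ℕ} (d : DDiag k) (i j : Tup n k) : ℂ :=
  (∏ t : Fin k,
    if t ∈ d.2 then (if j t = bar (i (d.1 t)) then (1 : ℂ) else 0)
    else (if j t = i (d.1 t) then (1 : ℂ) else 0))
  * sgn (crossExpD d.1 i + ∑ b ∈ d.2, parUpTo j b)

/-- matrix of the (right-)action of a `k`-superdiagram on `V^{⊗k}`: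
`v_i ↦ Σ_j wt(ᵢd_ⱼ) v_j`. -/
def Dmat (n k : ℕ) (d : DDiag k) : Matrix (Tup n k) (Tup n k) ℂ :=
  fun jj ii => wtD d ii jj

/-- the diagrammatic action `Φ̃_k : D_k → End_ℂ(V^{⊗k})`, extended linearly -/
noncomputable def tildePhi (n k : ℕ) (f : Dk k) : Matrix (Tup n k) (Tup n k) ℂ :=
  f.sum fun x a => a • Dmat n k x


/-! ### Auxiliary lemmas -/

lemma zmod2_cases (a : ZMod 2) : a = 0 ∨ a = 1 := by revert a; decide

lemma sgn_add (a b : ZMod 2) : sgn (a + b) = sgn a * sgn b := by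
  rcases zmod2_cases a with rfl|rfl <;> rcases zmod2_cases b with rfl|rfl <;>
    simp only [sgn, show (1:ZMod 2)+1 = 0 from rfl, add_zero, zero_add] <;>
    norm_num [show ((0:ZMod 2)).val = 0 from rfl, show ((1:ZMod 2)).val = 1 from rfl]

lemma sgn_zero : sgn 0 = 1 := by norm_num [sgn, show ((0:ZMod 2)).val = 0 from rfl]

lemma bar_bar {n : ℕ} (i : BI n) : bar (bar i) = i := by cases i <;> rfl

lemma par_bar {n : ℕ} (i : BI n) : par (bar i) = par i + 1 := by cases i <;> rfl

lemma zmod2_add_self (a : ZMod 2) : a + a = 0 := by revert a; decide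

lemma bar_eq_iff {n : ℕ} (a b : BI n) : a = bar b ↔ bar a = b := by
  constructor <;> rintro rfl <;> rw [bar_bar]

lemma crossExpD_eq_sum_pairs {n k : ℕ} (σ : Equiv.Perm (Fin k)) (x : Tup n k) :
    crossExpD σ x = ∑ p : Fin k × Fin k,
      (if p.1 < p.2 ∧ σ p.2 < σ p.1 then par (x (σ p.1)) * par (x (σ p.2)) else 0) := by
  rw [crossExpD, Fintype.sum_prod_type, Finset.sum_comm]
  refine Finset.sum_congr rfl fun t2 _ => ?_
  rw [Finset.sum_filter]
  refine Finset.sum_congr rfl fun t1 _ => ?_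
  rw [ite_and]

lemma swapIdx_lt_iff {k : ℕ} (i : ℕ) (h : i + 1 < k) (a b : Fin k)
    (h1 : ¬(a = ⟨i, Nat.lt_of_succ_lt h⟩ ∧ b = ⟨i+1, h⟩))
    (h2 : ¬(a = ⟨i+1, h⟩ ∧ b = ⟨i, Nat.lt_of_succ_lt h⟩)) :
    swapIdx i h a < swapIdx i h b ↔ a < b := by
  simp only [swapIdx, Equiv.swap_apply_def]
  rw [not_and_or] at h1 h2
  split_ifs <;>
    simp only [Fin.lt_def, Fin.ext_iff] at * <;> omega

lemma crossExpD_mul_swap {n k : ℕ} (σ : Equiv.Perm (Fin k)) (i : ℕ) (h : i + 1 < k)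
    (x : Tup n k) :
    crossExpD (σ * swapIdx i h) x
      = crossExpD σ x + par (x (σ ⟨i, Nat.lt_of_succ_lt h⟩)) * par (x (σ ⟨i+1, h⟩)) := by
  set ii : Fin k := ⟨i, Nat.lt_of_succ_lt h⟩ with hii
  set jj : Fin k := ⟨i+1, h⟩ with hjj
  have hij : ii ≠ jj := by simp [hii, hjj, Fin.ext_iff]
  have hττ : ∀ a, swapIdx i h (swapIdx i h a) = a := fun a => Equiv.swap_apply_self _ _ a
  have hτi : swapIdx i h ii = jj := Equiv.swap_apply_left _ _
  have hτj : swapIdx i h jj = ii := Equiv.swap_apply_right _ _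
  rw [crossExpD_eq_sum_pairs, crossExpD_eq_sum_pairs]
  rw [← Equiv.sum_comp (Equiv.prodCongr (swapIdx i h) (swapIdx i h))
    (fun p : Fin k × Fin k => if p.1 < p.2 ∧ (σ * swapIdx i h) p.2 < (σ * swapIdx i h) p.1
      then par (x ((σ * swapIdx i h) p.1)) * par (x ((σ * swapIdx i h) p.2)) else 0)]
  simp only [Equiv.prodCongr_apply, Prod.map_fst, Prod.map_snd, Equiv.Perm.mul_apply, hττ]
  have hmem2 : ((jj, ii) : Fin k × Fin k) ∈ Finset.univ.erase (ii, jj) :=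
    Finset.mem_erase.2 ⟨by simp [Prod.ext_iff]; intro hc; exact absurd hc.symm hij,
      Finset.mem_univ _⟩
  have hsplit : ∀ F : Fin k × Fin k → ZMod 2,
      ∑ p, F p
        = (∑ p ∈ (Finset.univ.erase ((ii, jj) : Fin k × Fin k)).erase (jj, ii), F p
            + F (jj, ii)) + F (ii, jj) := by
    intro F
    rw [Finset.sum_erase_add _ _ hmem2, Finset.sum_erase_add _ _ (Finset.mem_univ _)]
  rw [hsplit, hsplit]
  have hsame : ∑ p ∈ (Finset.univ.erase ((ii, jj) : Fin k × Fin k)).erase (jj, ii),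
        (if swapIdx i h p.1 < swapIdx i h p.2 ∧ σ p.2 < σ p.1
          then par (x (σ p.1)) * par (x (σ p.2)) else 0)
      = ∑ p ∈ (Finset.univ.erase ((ii, jj) : Fin k × Fin k)).erase (jj, ii),
        (if p.1 < p.2 ∧ σ p.2 < σ p.1 then par (x (σ p.1)) * par (x (σ p.2)) else 0) := by
    refine Finset.sum_congr rfl fun p hp => ?_
    have hp2 := Finset.mem_erase.1 hp
    have hp1 := Finset.mem_erase.1 hp2.2
    refine if_congr (and_congr_left' (swapIdx_lt_iff i h p.1 p.2 ?_ ?_)) rfl rfl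
    · intro hc; exact hp1.1 (Prod.ext hc.1 hc.2)
    · intro hc; exact hp2.1 (Prod.ext hc.1 hc.2)
  rw [hsame]
  have h1 : (if swapIdx i h (ii, jj).1 < swapIdx i h (ii, jj).2 ∧ σ (ii, jj).2 < σ (ii, jj).1
      then par (x (σ (ii, jj).1)) * par (x (σ (ii, jj).2)) else 0) = 0 := by
    rw [if_neg]
    rintro ⟨hlt, -⟩
    rw [hτi, hτj] at hlt
    exact absurd hlt (by simp [hii, hjj, Fin.lt_def])
  have h2 : (if ((jj, ii) : Fin k × Fin k).1 < (jj, ii).2 ∧ σ (jj, ii).2 < σ (jj, ii).1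
      then par (x (σ (jj, ii).1)) * par (x (σ (jj, ii).2)) else 0) = 0 := by
    rw [if_neg]
    rintro ⟨hlt, -⟩
    exact absurd hlt (by simp [hii, hjj, Fin.lt_def])
  rw [h1, h2, add_zero, add_zero]
  have hkey : (if swapIdx i h ((jj, ii) : Fin k × Fin k).1 < swapIdx i h (jj, ii).2
        ∧ σ (jj, ii).2 < σ (jj, ii).1
      then par (x (σ (jj, ii).1)) * par (x (σ (jj, ii).2)) else 0)
      = (if ((ii, jj) : Fin k × Fin k).1 < (ii, jj).2 ∧ σ (ii, jj).2 < σ (ii, jj).1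
          then par (x (σ (ii, jj).1)) * par (x (σ (ii, jj).2)) else 0)
        + par (x (σ ii)) * par (x (σ jj)) := by
    simp only [hτi, hτj]
    have hiijj : ii < jj := by simp [hii, hjj, Fin.lt_def]
    rcases lt_trichotomy (σ ii) (σ jj) with hlt | heq | hgt
    · rw [if_pos ⟨hiijj, hlt⟩, if_neg (by rintro ⟨-, hc⟩; exact absurd (hc.trans hlt) (lt_irrefl _)),
        zero_add, mul_comm]
    · exact absurd (σ.injective heq) hij
    · rw [if_neg (by rintro ⟨-, hc⟩; exact absurd (hc.trans hgt) (lt_irrefl _)),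
        if_pos ⟨hiijj, hgt⟩, zmod2_add_self]
  rw [hkey]
  ring

lemma crossExpD_one {n k : ℕ} (x : Tup n k) :
    crossExpD (1 : Equiv.Perm (Fin k)) x = 0 := by
  refine Finset.sum_eq_zero fun t2 _ => Finset.sum_eq_zero fun t1 ht1 => ?_
  rw [Finset.mem_filter] at ht1
  simp only [Equiv.Perm.coe_one, id_eq]
  exact if_neg (asymm ht1.2)

lemma Dmat_one (n k : ℕ) : Dmat n k (1, ∅) = 1 := by
  ext y x
  simp only [Dmat, wtD, crossExpD_one, Finset.sum_empty, add_zero, sgn_zero, mul_one,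
    Matrix.one_apply, Equiv.Perm.coe_one, id_eq]
  erw [Finset.prod_congr rfl (fun t _ => if_neg (Finset.notMem_empty t)), Finset.prod_boole]
  by_cases hyx : y = x
  · subst hyx; simp
  · rw [if_neg, if_neg hyx]
    intro hall
    exact hyx (funext fun t => hall t (Finset.mem_univ t))

lemma Dmat_empty_apply {n k : ℕ} (σ : Equiv.Perm (Fin k)) (y x : Tup n k) :
    Dmat n k (σ, ∅) y x = if y = x ∘ ⇑σ then sgn (crossExpD σ x) else 0 := by
  simp only [Dmat, wtD, Finset.sum_empty, add_zero]
  rw [Finset.prod_congr rfl (fun t _ => if_neg (Finset.notMem_empty t)), Finset.prod_boole]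
  by_cases hyx : y = x ∘ ⇑σ
  · rw [if_pos (show ∀ t ∈ Finset.univ, y t = x (σ t) from fun t _ => by rw [hyx]; rfl),
      if_pos hyx, one_mul]
  · rw [if_neg (show ¬∀ t ∈ Finset.univ, y t = x (σ t) from
      fun hall => hyx (funext fun t => hall t (Finset.mem_univ t))), if_neg hyx, zero_mul]

lemma Dmat_mul_swap (n k : ℕ) (σ : Equiv.Perm (Fin k)) (i : ℕ) (h : i + 1 < k) :
    Dmat n k (σ * swapIdx i h, ∅) = Smat n k i h * Dmat n k (σ, ∅) := by
  have hττ : ∀ a, swapIdx i h (swapIdx i h a) = a := fun a => Equiv.swap_apply_self _ _ a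
  ext y x
  rw [Matrix.mul_apply]
  rw [Finset.sum_eq_single_of_mem (y ∘ ⇑(swapIdx i h)) (Finset.mem_univ _) ?side]
  case side =>
    intro w _ hne
    refine mul_eq_zero_of_left ?_ _
    simp only [Smat]
    rw [if_neg]
    intro hc
    apply hne
    funext t
    show w t = y ((swapIdx i h) t)
    rw [congrFun hc (swapIdx i h t)]
    simp [Function.comp, hττ]
  rw [Dmat_empty_apply, Dmat_empty_apply]
  simp only [Smat]
  have hcond : (y ∘ ⇑(swapIdx i h) = x ∘ ⇑σ) ↔ (y = x ∘ ⇑(σ * swapIdx i h)) := by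
    constructor
    · intro hc
      funext t
      rw [Equiv.Perm.coe_mul, Function.comp_apply, Function.comp_apply]
      calc y t = y (swapIdx i h (swapIdx i h t)) := by rw [hττ]
      _ = x (σ (swapIdx i h t)) := congrFun hc _
    · intro hc
      funext t
      rw [Function.comp_apply, congrFun hc (swapIdx i h t)]
      simp [Equiv.Perm.coe_mul, Function.comp, hττ]
  rw [if_pos (show y = (y ∘ ⇑(swapIdx i h)) ∘ ⇑(swapIdx i h) from
    funext fun t => by simp [Function.comp, hττ])]
  by_cases hcase : y = x ∘ ⇑(σ * swapIdx i h)
  · rw [if_pos hcase, if_pos (hcond.2 hcase)]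
    have key : ∀ t, (y ∘ ⇑(swapIdx i h)) t = x (σ t) := fun t => by
      show y ((swapIdx i h) t) = x (σ t)
      rw [congrFun hcase (swapIdx i h t)]
      simp [Equiv.Perm.coe_mul, Function.comp, hττ]
    rw [key, key, crossExpD_mul_swap σ i h x, sgn_add, mul_comm]
  · rw [if_neg hcase, if_neg (fun hc => hcase (hcond.1 hc)), mul_zero]

lemma Dmat_insert (n k : ℕ) (σ : Equiv.Perm (Fin k)) (A : Finset (Fin k)) (a : Fin k)
    (ha : a ∉ A) (hmax : ∀ b ∈ A, b < a) :
    Dmat n k (σ, insert a A) = Cmat n k a * Dmat n k (σ, A) := by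
  ext y x
  rw [Matrix.mul_apply]
  set z : Tup n k := Function.update y a (bar (y a)) with hzdef
  have hzy : ∀ t, t ≠ a → z t = y t := fun t ht => Function.update_of_ne ht _ _
  have hza : z a = bar (y a) := Function.update_self _ _ _
  rw [Finset.sum_eq_single_of_mem z (Finset.mem_univ _) ?side]
  case side =>
    intro w _ hne
    refine mul_eq_zero_of_left ?_ _
    simp only [Cmat]
    rw [if_neg]
    intro hc
    apply hne
    have hya : y a = bar (w a) := by rw [hc]; exact Function.update_self _ _ _
    funext t
    by_cases ht : t = a
    · subst ht; rw [hza, hya, bar_bar]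
    · rw [hzy t ht, hc, Function.update_of_ne ht]
  simp only [Cmat]
  rw [if_pos ?hcond]
  case hcond =>
    funext t
    by_cases ht : t = a
    · subst ht; rw [Function.update_self, hza, bar_bar]
    · rw [Function.update_of_ne ht, hzy t ht]
  simp only [Dmat, wtD]
  have hprod : (∏ t : Fin k, if t ∈ insert a A then (if y t = bar (x (σ t)) then (1:ℂ) else 0)
        else (if y t = x (σ t) then (1:ℂ) else 0))
      = ∏ t : Fin k, if t ∈ A then (if z t = bar (x (σ t)) then (1:ℂ) else 0)
        else (if z t = x (σ t) then (1:ℂ) else 0) := by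
    refine Finset.prod_congr rfl fun t _ => ?_
    by_cases ht : t = a
    · subst ht
      rw [if_pos (Finset.mem_insert_self t A), if_neg ha, hza]
      exact if_congr (bar_eq_iff _ _) rfl rfl
    · rw [hzy t ht]
      simp only [Finset.mem_insert, eq_false ht, false_or]
  have hpb : parBelow z a = parBelow y a := by
    refine Finset.sum_congr rfl fun q hq => ?_
    rw [hzy q (ne_of_lt (Finset.mem_filter.1 hq).2)]
  have hsum : ∑ b ∈ A, parUpTo z b = ∑ b ∈ A, parUpTo y b := by
    refine Finset.sum_congr rfl fun b hb => ?_
    have hba : b < a := hmax b hb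
    rw [parUpTo, parUpTo, hzy b (ne_of_lt hba)]
    congr 1
    refine Finset.sum_congr rfl fun q hq => ?_
    exact congrArg par (hzy q (ne_of_lt (lt_trans (Finset.mem_filter.1 hq).2 hba)))
  rw [hprod, Finset.sum_insert ha, hpb, hza, par_bar, hsum]
  have hexp : crossExpD σ x + (parUpTo y a + ∑ b ∈ A, parUpTo y b)
      = (parBelow y a + (par (y a) + 1) + 1) + (crossExpD σ x + ∑ b ∈ A, parUpTo y b) := by
    rw [parUpTo]
    linear_combination (-1 : ZMod 2) * zmod2_add_self 1
  rw [hexp, sgn_add]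
  ring

lemma asList_insert_max {k : ℕ} (A : Finset (Fin k)) (a : Fin k)
    (ha : a ∉ A) (hmax : ∀ b ∈ A, b < a) :
    asList (insert a A) = asList A ++ [a] := by
  refine (fun hp hs => List.Perm.eq_of_pairwise' (Finset.pairwise_sort _ _) hs hp) ?_ ?_
  · refine ((Finset.sort_perm_toList _ _).trans ?_).trans
      (List.perm_append_singleton a _).symm
    refine (Finset.toList_insert ha).trans ?_
    exact List.Perm.cons a (Finset.sort_perm_toList _ _).symm
  · rw [List.pairwise_append]
    refine ⟨Finset.pairwise_sort _ _, List.pairwise_singleton _ a, fun b hb c hc => ?_⟩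
    rw [List.mem_singleton] at hc
    subst hc
    exact le_of_lt (hmax b ((Finset.mem_sort _).1 hb))

lemma cProd_insert_max {k : ℕ} (A : Finset (Fin k)) (a : Fin k)
    (ha : a ∉ A) (hmax : ∀ b ∈ A, b < a) :
    cProd (insert a A) = cProd A * cg a := by
  rw [cProd, cProd, asList_insert_max A a ha hmax]
  simp

lemma op_Dmat_perm (n k : ℕ)
    (S : Equiv.Perm (Fin k) →* Ser k)
    (hS : ∀ (i : ℕ) (h : i + 1 < k), S (swapIdx i h) = sg i h)
    (Φ : Ser k →ₐ[ℂ] (Matrix (Tup n k) (Tup n k) ℂ)ᵐᵒᵖ)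
    (hΦs : ∀ (i : ℕ) (h : i + 1 < k), Φ (sg i h) = MulOpposite.op (Smat n k i h)) :
    ∀ σ : Equiv.Perm (Fin k), MulOpposite.op (Dmat n k (σ, ∅)) = Φ (S σ) := by
  have base : MulOpposite.op (Dmat n k ((1 : Equiv.Perm (Fin k)), ∅)) = Φ (S 1) := by
    rw [Dmat_one, map_one, map_one, MulOpposite.op_one]
  have step : ∀ (i : ℕ) (h : i + 1 < k) (ρ : Equiv.Perm (Fin k)),
      MulOpposite.op (Dmat n k (ρ, ∅)) = Φ (S ρ) →
      MulOpposite.op (Dmat n k (ρ * swapIdx i h, ∅)) = Φ (S (ρ * swapIdx i h)) := by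
    intro i h ρ hρ
    rw [Dmat_mul_swap, MulOpposite.op_mul, hρ, map_mul, map_mul, hS i h, hΦs i h]
  cases k with
  | zero =>
    intro σ
    have hσ : σ = 1 := Equiv.ext fun t => t.elim0
    rw [hσ]; exact base
  | succ m =>
    intro σ
    have hmem : σ ∈ Submonoid.closure (Set.range fun i : Fin m =>
        Equiv.swap i.castSucc i.succ) := by
      rw [Equiv.Perm.mclosure_swap_castSucc_succ]; trivial
    suffices hsuff : ∀ ρ : Equiv.Perm (Fin (m+1)),
        MulOpposite.op (Dmat n (m+1) (ρ, ∅)) = Φ (S ρ) →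
        MulOpposite.op (Dmat n (m+1) (ρ * σ, ∅)) = Φ (S (ρ * σ)) by
      have := hsuff 1 base
      rw [one_mul] at this
      exact this
    induction hmem using Submonoid.closure_induction with
    | mem x hx =>
      obtain ⟨i, rfl⟩ := hx
      intro ρ hρ
      have hlt : (i : ℕ) + 1 < m + 1 := Nat.succ_lt_succ i.isLt
      have h1 : Fin.castSucc i = (⟨(i : ℕ), Nat.lt_of_succ_lt hlt⟩ : Fin (m+1)) :=
        Fin.ext rfl
      have h2 : Fin.succ i = (⟨(i : ℕ) + 1, hlt⟩ : Fin (m+1)) := Fin.ext rfl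
      have hswap : Equiv.swap (Fin.castSucc i) (Fin.succ i) = swapIdx (i : ℕ) hlt := by
        rw [swapIdx, h1, h2]
      show MulOpposite.op (Dmat n (m+1) (ρ * Equiv.swap i.castSucc i.succ, ∅))
        = Φ (S (ρ * Equiv.swap i.castSucc i.succ))
      rw [hswap]
      exact step (i : ℕ) hlt ρ hρ
    | one =>
      intro ρ hρ
      rw [mul_one]
      exact hρ
    | mul x y hx hy ihx ihy =>
      intro ρ hρ
      rw [← mul_assoc]
      exact ihy _ (ihx _ hρ)

lemma op_Dmat_full (n k : ℕ)
    (S : Equiv.Perm (Fin k) →* Ser k)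
    (hS : ∀ (i : ℕ) (h : i + 1 < k), S (swapIdx i h) = sg i h)
    (Φ : Ser k →ₐ[ℂ] (Matrix (Tup n k) (Tup n k) ℂ)ᵐᵒᵖ)
    (hΦs : ∀ (i : ℕ) (h : i + 1 < k), Φ (sg i h) = MulOpposite.op (Smat n k i h))
    (hΦc : ∀ j : Fin k, Φ (cg j) = MulOpposite.op (Cmat n k j)) :
    ∀ (σ : Equiv.Perm (Fin k)) (A : Finset (Fin k)),
      MulOpposite.op (Dmat n k (σ, A)) = Φ (S σ * cProd A) := by
  intro σ A
  induction A using Finset.induction_on_max with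
  | empty =>
    rw [cProd, asList, Finset.sort_empty, List.map_nil, List.prod_nil, mul_one]
    exact op_Dmat_perm n k S hS Φ hΦs σ
  | insert a A hlt IH =>
    have ha : a ∉ A := fun hc => lt_irrefl a (hlt a hc)
    rw [Dmat_insert n k σ A a ha hlt, MulOpposite.op_mul, IH, ← hΦc a, ← map_mul,
      cProd_insert_max A a ha hlt, mul_assoc]

/-- Lemma 2.5: for every `k`-superdiagram `d`, the diagrammatic
action agrees with the Sergeev action under `φ_k`:  `Φ̃_k(d) = Φ_k(φ_k(d))`.
(`S`, `φ` and `Φ` are characterized by their values on generators/basis diagrams.) -/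
theorem diagrammatic_action_eq_sergeev_action (n k : ℕ)
    (S : Equiv.Perm (Fin k) →* Ser k)
    (hS : ∀ (i : ℕ) (h : i + 1 < k), S (swapIdx i h) = sg i h)
    (φ : Dk k →ₗ[ℂ] Ser k)
    (hφ : ∀ x : DDiag k, φ (Finsupp.single x 1) = S x.1 * cProd x.2)
    (Φ : Ser k →ₐ[ℂ] (Matrix (Tup n k) (Tup n k) ℂ)ᵐᵒᵖ)
    (hΦs : ∀ (i : ℕ) (h : i + 1 < k), Φ (sg i h) = MulOpposite.op (Smat n k i h))
    (hΦc : ∀ j : Fin k, Φ (cg j) = MulOpposite.op (Cmat n k j)) :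
    ∀ d : Dk k, MulOpposite.op (tildePhi n k d) = Φ (φ d) := by
  intro d
  induction d using Finsupp.induction_linear with
  | zero =>
    have ht0 : tildePhi n k 0 = 0 := Finsupp.sum_zero_index
    rw [ht0, map_zero, map_zero, MulOpposite.op_zero]
  | add f g ihf ihg =>
    have htadd : tildePhi n k (f + g) = tildePhi n k f + tildePhi n k g :=
      Finsupp.sum_add_index' (fun x => zero_smul ℂ _) (fun x b c => add_smul b c _)
    rw [htadd, MulOpposite.op_add, map_add, map_add, ihf, ihg]
  | single x a =>
    have h1 : tildePhi n k (Finsupp.single x a) = a • Dmat n k x :=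
      Finsupp.sum_single_index (zero_smul ℂ _)
    have h2 : φ (Finsupp.single x a) = a • (S x.1 * cProd x.2) := by
      rw [← hφ x, ← map_smul, Finsupp.smul_single, smul_eq_mul, mul_one]
    rw [h1, h2, map_smul, MulOpposite.op_smul]
    congr 1
    exact op_Dmat_full n k S hS Φ hΦs hΦc x.1 x.2

end SergeevSW
end
end

section
/- Let d be an (r,s)-superdiagram, let a_1 < ... < a_p be the left vertices of the marked horizontal edges on the bottom row of d, let b_1 < ... < b_q be the positions obtained by reading the top vertices of the marked vertical edges together with the left vertices of the marked horizontal edges on the top row of d from left to right, and let d' be the (r,s)-superdiagram obtained from d by forgetting all marks. Then in End_C(V^{⊗r} ⊗ W^{⊗s})^{op} one has Ψ_{r,s}(d) = Ψ_{r,s}(c_{a_1})···Ψ_{r,s}(c_{a_p}) Ψ_{r,s}(d') Ψ_{r,s}(c_{b_1})···Ψ_{r,s}(c_{b_q}). -/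
/-!
STATEMENT 4: decomposition of the action of an `(r,s)`-superdiagram into the
actions of the marked-edge diagrams `c_i` and of the underlying unmarked diagram.
-/

noncomputable section

namespace WalledBS

/-- Index set `{1,…,n,1̄,…,n̄}` of the standard basis of `V = ℂ^{n|n}`. -/
abbrev BI (n : ℕ) := Fin n ⊕ Fin n

/-- parity of a basis index -/
def par {n : ℕ} : BI n → ZMod 2
  | Sum.inl _ => 0
  | Sum.inr _ => 1

/-- bar involution on indices -/
def bar {n : ℕ} : BI n → BI n
  | Sum.inl i => Sum.inr i
  | Sum.inr i => Sum.inl i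

/-- `(-1)^z` for `z : ℤ/2ℤ` -/
def sgn (z : ZMod 2) : ℂ := (-1 : ℂ) ^ z.val

/-- Index tuples for the standard basis of the mixed tensor space
`V^{⊗r} ⊗ W^{⊗s}` (positions `< r` index `V`-factors, positions `≥ r` index
`W`-factors). -/
abbrev Tup (n k : ℕ) := Fin k → BI n

/-- total parity of a basis tuple -/
def parT {n k : ℕ} (x : Tup n k) : ZMod 2 := ∑ p, par (x p)

/-- sum of parities of the entries strictly before position `p` -/
def parBelow {n k : ℕ} (x : Tup n k) (p : Fin k) : ZMod 2 :=
  ∑ q ∈ Finset.univ.filter (fun q => q < p), par (x q)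

/-- sum of parities of the entries at positions `≤ p` -/
def parUpTo {n k : ℕ} (x : Tup n k) (p : Fin k) : ZMod 2 := parBelow x p + par (x p)

/-- The queer Lie superalgebra `q(n)` in block matrix form `((A,B),(B,A))`. -/
def qn (n : ℕ) : Set (Matrix (BI n) (BI n) ℂ) :=
  {M | ∀ i j : Fin n,
    M (Sum.inl i) (Sum.inl j) = M (Sum.inr i) (Sum.inr j) ∧
    M (Sum.inl i) (Sum.inr j) = M (Sum.inr i) (Sum.inl j)}

/-- a matrix is homogeneous of parity `p` -/
def IsHomog {ι : Type} (pr : ι → ZMod 2) (p : ZMod 2) (M : Matrix ι ι ℂ) : Prop :=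
  ∀ i j, M i j ≠ 0 → pr i = pr j + p

/-- homogeneous component of parity `p` of a matrix -/
def matComp {ι : Type} (pr : ι → ZMod 2) (p : ZMod 2) (M : Matrix ι ι ℂ) :
    Matrix ι ι ℂ :=
  fun i j => if pr i = pr j + p then M i j else 0

/-- An `(r,s)`-superdiagram: a perfect matching `π` (an involution without fixed
points) of the `2(r+s)` vertices (`true` = top row, `false` = bottom row; wall
between positions `r-1` and `r`, 0-based), such that an edge joins two vertices in
the same row iff it crosses the wall, together with a marking `mk` of the edges. -/
structure WDiag (r s : ℕ) where
  π : Bool × Fin (r + s) → Bool × Fin (r + s)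
  invol : ∀ v, π (π v) = v
  nofix : ∀ v, π v ≠ v
  wall : ∀ v, ((π v).1 = v.1) ↔ ¬(((π v).2.val < r) ↔ (v.2.val < r))
  mrk : Bool × Fin (r + s) → Bool
  mkE : ∀ v, mrk (π v) = mrk v

/-- the label of a vertex in a labeled diagram (`i` = bottom labels, `j` = top labels) -/
def lab {n r s : ℕ} (i j : Tup n (r + s)) (v : Bool × Fin (r + s)) : BI n :=
  if v.1 then j v.2 else i v.2

/-- the good vertex of each edge: the left vertex of a horizontal edge, the top
vertex of a vertical edge.  `isGoodW d v` holds iff `v` is the good vertex of its edge. -/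
def isGoodW {r s : ℕ} (d : WDiag r s) (v : Bool × Fin (r + s)) : Bool :=
  if (d.π v).1 = v.1 then decide (v.2 < (d.π v).2) else v.1

/-- parity of an edge (with good vertex `v`) in a labeled diagram: the parity of the
label at the bottom vertex (vertical edge), resp. at the right vertex (horizontal). -/
def parE {n r s : ℕ} (d : WDiag r s) (i j : Tup n (r + s))
    (v : Bool × Fin (r + s)) : ZMod 2 :=
  par (lab i j (d.π v))

/-- whether the two edges with good vertices `g1 ≠ g2` cross each other (drawn with
straight vertical edges and horizontal arcs near their row). -/
def crossB {r s : ℕ} (d : WDiag r s) (g1 g2 : Bool × Fin (r + s)) : Bool :=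
  let h1 := d.π g1
  let h2 := d.π g2
  if h1.1 = g1.1 then
    if h2.1 = g2.1 then
      decide (g1.1 = g2.1) &&
        (decide (g1.2 < g2.2 ∧ g2.2 < h1.2 ∧ h1.2 < h2.2) ||
         decide (g2.2 < g1.2 ∧ g1.2 < h2.2 ∧ h2.2 < h1.2))
    else
      let e := if g1.1 then g2.2 else h2.2
      decide (g1.2 < e ∧ e < h1.2)
  else
    if h2.1 = g2.1 then
      let e := if g2.1 then g1.2 else h1.2
      decide (g2.2 < e ∧ e < h2.2)
    else
      decide ((g1.2 < g2.2 ∧ h2.2 < h1.2) ∨ (g2.2 < g1.2 ∧ h1.2 < h2.2))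

/-- a linear order key on vertices (bottom row first, left to right) -/
def vKey {r s : ℕ} (v : Bool × Fin (r + s)) : ℕ :=
  (if v.1 then r + s else 0) + v.2.val

/-- crossing sign exponent `Σ_c |e_1||e_2|` of a labeled `(r,s)`-superdiagram -/
def crossExpW {n r s : ℕ} (d : WDiag r s) (i j : Tup n (r + s)) : ZMod 2 :=
  ∑ g2 ∈ Finset.univ.filter (fun v => isGoodW d v),
    ∑ g1 ∈ Finset.univ.filter (fun v => isGoodW d v ∧ vKey v < vKey g2),
      if crossB d g1 g2 then parE d i j g1 * parE d i j g2 else 0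

/-- the sign exponent `Σ_h |h|` over bottom-row horizontal edges (`|h|` = parity of
the label at the right vertex) -/
def hExpW {n r s : ℕ} (d : WDiag r s) (i : Tup n (r + s)) : ZMod 2 :=
  ∑ g ∈ Finset.univ.filter (fun v : Bool × Fin (r + s) =>
      isGoodW d v ∧ v.1 = false ∧ (d.π v).1 = false),
    par (i (d.π g).2)

/-- left vertices (positions, in increasing order) of the marked horizontal edges on
the bottom row -/
def botList {r s : ℕ} (d : WDiag r s) : List (Fin (r + s)) :=
  (List.finRange (r + s)).filter (fun p =>
    decide ((d.π (false, p)).1 = false) && decide (p < (d.π (false, p)).2)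
      && d.mrk (false, p))

/-- the exponent `Σ_i m(e_i)` over the marked horizontal edges on the bottom row:
`m(e_i) = i + |i_1| + ⋯ + |i_{a_i}|` for the `i`-th such edge with left vertex `a_i` -/
def botExpW {n r s : ℕ} (d : WDiag r s) (i : Tup n (r + s)) : ZMod 2 :=
  (((botList d).length * ((botList d).length + 1) / 2 : ℕ) : ZMod 2) +
    ((botList d).map (fun a => parUpTo i a)).sum

/-- positions (in increasing order) of the top vertices of the marked vertical edges
together with the left vertices of the marked horizontal edges on the top row -/
def topList {r s : ℕ} (d : WDiag r s) : List (Fin (r + s)) :=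
  (List.finRange (r + s)).filter (fun p =>
    d.mrk (true, p) &&
      (decide ((d.π (true, p)).1 = false) || decide (p < (d.π (true, p)).2)))

/-- the exponent `Σ_i m(ẽ_i)` over the marked edges read along the top row:
`m(ẽ) = |j_1|+⋯+|j_b|` if `b ≤ r` and `|j_1|+⋯+|j_{b-1}|` if `b > r` (1-based). -/
def topExpW {n r s : ℕ} (d : WDiag r s) (j : Tup n (r + s)) : ZMod 2 :=
  ((topList d).map (fun b => if b.val < r then parUpTo j b else parBelow j b)).sum

/-- weight `wt(ᵢd_ⱼ)` of a labeled `(r,s)`-superdiagram: product of Kronecker deltas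
over the edges (with bar for marked edges), the signs over bottom-row horizontal
edges, the crossing signs and the marked-edge signs. -/
def wtW {n r s : ℕ} (d : WDiag r s) (i j : Tup n (r + s)) : ℂ :=
  (∏ g ∈ Finset.univ.filter (fun v => isGoodW d v),
    (if d.mrk g then (if lab i j (d.π g) = bar (lab i j g) then (1 : ℂ) else 0)
     else (if lab i j (d.π g) = lab i j g then (1 : ℂ) else 0)))
  * sgn (hExpW d i + crossExpW d i j + botExpW d i + topExpW d j)

/-- matrix (in the standard basis of the mixed tensor space) of the right action of
an `(r,s)`-superdiagram: `v_{i^L} ⊗ w_{i^R} ↦ Σ_j wt(ᵢd_ⱼ) v_{j^L} ⊗ w_{j^R}` -/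
def PsiMat (n : ℕ) {r s : ℕ} (d : WDiag r s) :
    Matrix (Tup n (r + s)) (Tup n (r + s)) ℂ :=
  fun jj ii => wtW d ii jj

/-- the superspace `B_{r,s}` with basis the `(r,s)`-superdiagrams -/
abbrev WB (r s : ℕ) := WDiag r s →₀ ℂ

/-- the linear map `Ψ_{r,s} : B_{r,s} → End_ℂ(V^{⊗r} ⊗ W^{⊗s})` -/
noncomputable def PsiFun (n r s : ℕ) (f : WB r s) :
    Matrix (Tup n (r + s)) (Tup n (r + s)) ℂ :=
  f.sum fun d a => a • PsiMat n d

/-- The action of `q(n)` on the mixed tensor space `V^{⊗r} ⊗ W^{⊗s}` (diagonal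
action with Koszul signs; on the `W`-factors through the antipode). -/
def rhoM (n r s : ℕ) (M : Matrix (BI n) (BI n) ℂ) :
    Matrix (Tup n (r + s)) (Tup n (r + s)) ℂ :=
  fun y x => ∑ p : Fin (r + s),
    if ∀ q, q ≠ p → x q = y q then
      sgn ((par (x p) + par (y p)) * parBelow x p) *
        (if p.val < r then M (y p) (x p)
         else -(sgn ((par (y p) + par (x p)) * par (x p)) * M (x p) (y p)))
    else 0

/-- the supercentralizer `End_{q(n)}(V^{⊗r} ⊗ W^{⊗s})` -/
def SCM (n r s : ℕ) : Set (Matrix (Tup n (r + s)) (Tup n (r + s)) ℂ) :=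
  {f | ∀ M ∈ qn n, ∀ pg : ZMod 2, IsHomog par pg M → ∀ pf : ZMod 2,
    matComp parT pf f * rhoM n r s M = sgn (pf * pg) • (rhoM n r s M * matComp parT pf f)}

/-- the `(r,s)`-superdiagram `c_a`: all vertical normal edges, except that the
`a`-th vertical edge is marked -/
def cDiagW (r s : ℕ) (a : Fin (r + s)) : WDiag r s where
  π := fun v => (!v.1, v.2)
  invol := by intro v; simp
  nofix := by intro v; simp [Prod.ext_iff]
  wall := by intro v; simp
  mrk := fun v => decide (v.2 = a)
  mkE := by intro v; rfl

/-- forget all marks of a superdiagram -/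
def unmarkD {r s : ℕ} (d : WDiag r s) : WDiag r s :=
  { d with mrk := fun _ => false, mkE := fun _ => rfl }


section Aux

lemma bar_bar {n : ℕ} (i : BI n) : bar (bar i) = i := by cases i <;> rfl

lemma par_bar {n : ℕ} (i : BI n) : par (bar i) = par i + 1 := by
  cases i <;> simp [par, bar] <;> decide

lemma sgn_zero : sgn 0 = 1 := by simp [sgn]

lemma sgn_add (x y : ZMod 2) : sgn (x + y) = sgn x * sgn y := by
  have hx : x = 0 ∨ x = 1 := by revert x; decide
  have hy : y = 0 ∨ y = 1 := by revert y; decide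
  have h2 : ((1 : ZMod 2) + 1) = 0 := by decide
  have v0 : (0 : ZMod 2).val = 0 := rfl
  have v1 : (1 : ZMod 2).val = 1 := rfl
  rcases hx with h | h <;> rcases hy with h' | h' <;> subst h <;> subst h' <;>
    simp [sgn, h2, v0, v1] <;> norm_num

/-- bar the entry of a tuple at position `a` -/
def barAt {n k : ℕ} (a : Fin k) (x : Tup n k) : Tup n k :=
  Function.update x a (bar (x a))

lemma barAt_apply {n k : ℕ} (a p : Fin k) (x : Tup n k) :
    barAt a x p = if p = a then bar (x a) else x p := Function.update_apply ..

lemma barAt_barAt {n k : ℕ} (a : Fin k) (x : Tup n k) : barAt a (barAt a x) = x := by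
  funext p
  rcases eq_or_ne p a with rfl | h
  · simp [barAt_apply, bar_bar]
  · simp [barAt_apply, h]

lemma eq_barAt_iff {n k : ℕ} (a : Fin k) (x y : Tup n k) :
    x = barAt a y ↔ y = barAt a x := by
  constructor <;> rintro rfl <;> rw [barAt_barAt]

/-- the sign exponent attached to `c_a` (`a < r`: up to `a`; else strictly below `a`) -/
def eC (r : ℕ) {n k : ℕ} (x : Tup n k) (a : Fin k) : ZMod 2 :=
  if a.val < r then parUpTo x a else parBelow x a

lemma parBelow_congr {n k : ℕ} {x y : Tup n k} {c : Fin k}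
    (h : ∀ q, q < c → x q = y q) : parBelow x c = parBelow y c := by
  unfold parBelow
  exact Finset.sum_congr rfl (fun q hq => by rw [h q (Finset.mem_filter.mp hq).2])

lemma parBelow_barAt_of_lt {n k : ℕ} {q c : Fin k} (h : q < c) (x : Tup n k) :
    parBelow (barAt q x) c = parBelow x c + 1 := by
  unfold parBelow
  have hmem : q ∈ Finset.univ.filter (fun q' => q' < c) := by
    simp [Finset.mem_filter, h]
  rw [Finset.sum_congr rfl (g := fun q' => par (x q') + if q' = q then 1 else 0)
    (fun q' _ => by
      rcases eq_or_ne q' q with rfl | hne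
      · simp [barAt_apply, par_bar]
      · simp [barAt_apply, hne]),
    Finset.sum_add_distrib, Finset.sum_ite_eq' _ q, if_pos hmem]

lemma parBelow_barAt_of_not_lt {n k : ℕ} {q c : Fin k} (h : ¬ q < c) (x : Tup n k) :
    parBelow (barAt q x) c = parBelow x c := by
  apply parBelow_congr
  intro p hp
  rw [barAt_apply, if_neg (by rintro rfl; exact h hp)]

lemma parUpTo_barAt_of_lt {n k : ℕ} {q c : Fin k} (h : q < c) (x : Tup n k) :
    parUpTo (barAt q x) c = parUpTo x c + 1 := by
  unfold parUpTo
  rw [parBelow_barAt_of_lt h, barAt_apply, if_neg (by rintro rfl; exact lt_irrefl _ h)]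
  ring

lemma parUpTo_barAt_self {n k : ℕ} (a : Fin k) (x : Tup n k) :
    parUpTo (barAt a x) a = parUpTo x a + 1 := by
  unfold parUpTo
  rw [parBelow_barAt_of_not_lt (lt_irrefl a), barAt_apply, if_pos rfl, par_bar]
  ring

lemma eC_barAt_of_lt {n k : ℕ} {q c : Fin k} (h : q < c) (r : ℕ) (x : Tup n k) :
    eC r (barAt q x) c = eC r x c + 1 := by
  unfold eC
  split
  · exact parUpTo_barAt_of_lt h x
  · exact parBelow_barAt_of_lt h x

lemma eC_barAt_of_gt {n k : ℕ} {q c : Fin k} (h : c < q) (r : ℕ) (x : Tup n k) :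
    eC r (barAt q x) c = eC r x c := by
  unfold eC
  split
  · unfold parUpTo
    rw [parBelow_barAt_of_not_lt (by omega), barAt_apply,
      if_neg (by rintro rfl; exact lt_irrefl _ h)]
  · exact parBelow_barAt_of_not_lt (by omega) x

lemma eC_barAt_self {n k : ℕ} {a : Fin k} {r : ℕ} (h : a.val < r) (x : Tup n k) :
    eC r (barAt a x) a = eC r x a + 1 := by
  unfold eC
  rw [if_pos h, if_pos h, parUpTo_barAt_self]

end Aux

section CDiag

variable {n r s : ℕ}

lemma isGoodW_cDiagW (a : Fin (r + s)) (v : Bool × Fin (r + s)) :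
    isGoodW (cDiagW r s a) v = v.1 := by
  unfold isGoodW cDiagW
  simp

lemma filter_nodup_singleton {α : Type*} [DecidableEq α] (a : α) :
    ∀ (l : List α), l.Nodup → a ∈ l → l.filter (fun p => decide (p = a)) = [a] := by
  intro l
  induction l with
  | nil => intro _ h; simp at h
  | cons b l ih =>
    intro hnd hmem
    rcases List.mem_cons.mp hmem with h | hmem'
    · subst h
      have : l.filter (fun p => decide (p = a)) = [] := by
        rw [List.filter_eq_nil_iff]
        intro p hp
        simp only [decide_eq_true_eq]
        rintro rfl
        exact (List.nodup_cons.mp hnd).1 hp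
      simp [List.filter_cons, this]
    · have hne : b ≠ a := by rintro rfl; exact (List.nodup_cons.mp hnd).1 hmem'
      rw [List.filter_cons, if_neg (by simp [hne]), ih (List.nodup_cons.mp hnd).2 hmem']

lemma botList_cDiagW (a : Fin (r + s)) : botList (cDiagW r s a) = [] := by
  unfold botList cDiagW
  rw [List.filter_eq_nil_iff]
  intro p _
  simp

lemma topList_cDiagW (a : Fin (r + s)) : topList (cDiagW r s a) = [a] := by
  unfold topList cDiagW
  rw [show (fun p : Fin (r+s) => (decide (p = a) &&
      (decide (((fun v : Bool × Fin (r+s) => (!v.1, v.2)) (true, p)).1 = false) ||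
        decide (p < ((fun v : Bool × Fin (r+s) => (!v.1, v.2)) (true, p)).2)))) =
      (fun p : Fin (r+s) => decide (p = a)) from by funext p; simp]
  exact filter_nodup_singleton a _ (List.nodup_finRange _) (List.mem_finRange a)

lemma wtW_cDiagW (a : Fin (r + s)) (ii kk : Tup n (r + s)) :
    wtW (cDiagW r s a) ii kk = (if kk = barAt a ii then 1 else 0) * sgn (eC r kk a) := by
  unfold wtW
  have hgood : (Finset.univ.filter (fun v => isGoodW (cDiagW r s a) v)) =
      (Finset.univ.filter (fun v : Bool × Fin (r+s) => v.1 = true)) := by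
    apply Finset.filter_congr
    intro v _
    simp [isGoodW_cDiagW]
  -- the delta product
  have hprod : (∏ g ∈ Finset.univ.filter (fun v => isGoodW (cDiagW r s a) v),
      (if (cDiagW r s a).mrk g then
        (if lab ii kk ((cDiagW r s a).π g) = bar (lab ii kk g) then (1 : ℂ) else 0)
       else (if lab ii kk ((cDiagW r s a).π g) = lab ii kk g then (1 : ℂ) else 0)))
      = (if kk = barAt a ii then 1 else 0) := by
    rw [hgood]
    rw [Finset.prod_filter]
    rw [Fintype.prod_prod_type]
    rw [Fintype.prod_bool]
    have hfalse : (∏ p : Fin (r+s), (if ((false, p) : Bool × Fin (r+s)).1 = true then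
        (if (cDiagW r s a).mrk (false, p) then
          (if lab ii kk ((cDiagW r s a).π (false, p)) = bar (lab ii kk (false, p)) then (1 : ℂ) else 0)
         else (if lab ii kk ((cDiagW r s a).π (false, p)) = lab ii kk (false, p) then (1 : ℂ) else 0))
        else 1)) = 1 := by
      apply Finset.prod_eq_one
      intro p _
      simp
    rw [hfalse, mul_one]
    have hstep : ∀ p : Fin (r+s), (if ((true, p) : Bool × Fin (r+s)).1 = true then
        (if (cDiagW r s a).mrk (true, p) then
          (if lab ii kk ((cDiagW r s a).π (true, p)) = bar (lab ii kk (true, p)) then (1 : ℂ) else 0)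
         else (if lab ii kk ((cDiagW r s a).π (true, p)) = lab ii kk (true, p) then (1 : ℂ) else 0))
        else 1) = (if ii p = barAt a kk p then (1:ℂ) else 0) := by
      intro p
      rw [if_pos rfl]
      show (if decide (p = a) = true then _ else _) = _
      rcases eq_or_ne p a with rfl | hne
      · rw [if_pos (by simp), barAt_apply, if_pos rfl]
        rfl
      · rw [if_neg (by simp [hne]), barAt_apply, if_neg hne]
        rfl
    rw [Finset.prod_congr rfl (fun p _ => hstep p), Finset.prod_boole]
    have : (∀ p : Fin (r+s), ii p = barAt a kk p) ↔ kk = barAt a ii := by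
      constructor
      · intro h
        rw [eq_barAt_iff]
        funext p
        exact (h p)
      · intro h p
        exact congrFun ((eq_barAt_iff a kk ii).mp h) p
    simp only [Finset.mem_univ, true_implies]
    simp only [this]
  rw [hprod]
  congr 1
  -- the sign
  have hh : hExpW (cDiagW r s a) ii = 0 := by
    apply Finset.sum_eq_zero
    intro v hv
    have := Finset.mem_filter.mp hv
    rw [isGoodW_cDiagW] at this
    exact absurd this.2.2.1 (by simp [this.2.1])
  have hc : crossExpW (cDiagW r s a) ii kk = 0 := by
    apply Finset.sum_eq_zero
    intro g2 hg2
    apply Finset.sum_eq_zero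
    intro g1 hg1
    have hcb : crossB (cDiagW r s a) g1 g2 = false := by
      unfold crossB cDiagW
      simp only []
      rw [if_neg (by simp), if_neg (by simp)]
      simp only [decide_eq_false_iff_not, Fin.lt_def, not_or, not_and]
      omega
    simp [hcb]
  have hb : botExpW (cDiagW r s a) ii = 0 := by
    unfold botExpW
    rw [botList_cDiagW]
    simp
  have ht : topExpW (cDiagW r s a) kk = eC r kk a := by
    unfold topExpW
    rw [topList_cDiagW]
    simp [eC]
  rw [hh, hc, hb, ht]
  ring_nf

end CDiag

section Prods

variable {n r s : ℕ}

lemma mul_cDiag (X : Matrix (Tup n (r + s)) (Tup n (r + s)) ℂ) (a : Fin (r + s))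
    (jj ii : Tup n (r + s)) :
    (X * PsiMat n (cDiagW r s a)) jj ii
      = sgn (eC r (barAt a ii) a) * X jj (barAt a ii) := by
  rw [Matrix.mul_apply]
  have hstep : ∀ k : Tup n (r+s), X jj k * PsiMat n (cDiagW r s a) k ii
      = if k = barAt a ii then sgn (eC r k a) * X jj k else 0 := by
    intro k
    show X jj k * wtW (cDiagW r s a) ii k = _
    rw [wtW_cDiagW]
    rcases eq_or_ne k (barAt a ii) with h | h
    · rw [if_pos h, if_pos h]
      ring
    · rw [if_neg h, if_neg h]
      ring
  rw [Finset.sum_congr rfl (fun k _ => hstep k), Finset.sum_ite_eq' _ (barAt a ii),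
    if_pos (Finset.mem_univ _)]

lemma cDiag_mul (X : Matrix (Tup n (r + s)) (Tup n (r + s)) ℂ) (b : Fin (r + s))
    (jj ii : Tup n (r + s)) :
    (PsiMat n (cDiagW r s b) * X) jj ii
      = sgn (eC r jj b) * X (barAt b jj) ii := by
  rw [Matrix.mul_apply]
  have hstep : ∀ k : Tup n (r+s), PsiMat n (cDiagW r s b) jj k * X k ii
      = if k = barAt b jj then sgn (eC r jj b) * X k ii else 0 := by
    intro k
    show wtW (cDiagW r s b) k jj * X k ii = _
    rw [wtW_cDiagW]
    rcases eq_or_ne k (barAt b jj) with h | h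
    · rw [if_pos ((eq_barAt_iff b jj k).mpr h), if_pos h]
      ring
    · rw [if_neg (fun hc => h ((eq_barAt_iff b jj k).mp hc)), if_neg h]
      ring
  rw [Finset.sum_congr rfl (fun k _ => hstep k), Finset.sum_ite_eq' _ (barAt b jj),
    if_pos (Finset.mem_univ _)]

/-- bar a tuple at the positions of a list, left to right -/
def barLs {n k : ℕ} : List (Fin k) → Tup n k → Tup n k
  | [], x => x
  | a :: L, x => barLs L (barAt a x)

/-- bar a tuple at the positions of a list, right to left -/
def barRs {n k : ℕ} : List (Fin k) → Tup n k → Tup n k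
  | [], x => x
  | b :: L, x => barAt b (barRs L x)

/-- accumulated sign exponent for right multiplication by the `c_a` -/
def expA (r : ℕ) {n k : ℕ} : List (Fin k) → Tup n k → ZMod 2
  | [], _ => 0
  | a :: L, x => eC r (barAt a x) a + expA r L (barAt a x)

/-- accumulated sign exponent for left multiplication by the `c_b` -/
def expB (r : ℕ) {n k : ℕ} : List (Fin k) → Tup n k → ZMod 2
  | [], _ => 0
  | b :: L, x => expB r L x + eC r (barRs L x) b

lemma mul_prod_cDiag (X : Matrix (Tup n (r + s)) (Tup n (r + s)) ℂ)
    (L : List (Fin (r + s))) (jj ii : Tup n (r + s)) :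
    (X * ((L.map (fun a => PsiMat n (cDiagW r s a))).reverse.prod)) jj ii
      = sgn (expA r L ii) * X jj (barLs L ii) := by
  induction L generalizing X ii with
  | nil => simp [expA, barLs, sgn_zero]
  | cons a L ih =>
    rw [List.map_cons, List.reverse_cons, List.prod_append, List.prod_singleton,
      ← Matrix.mul_assoc, mul_cDiag, ih]
    show _ = sgn (eC r (barAt a ii) a + expA r L (barAt a ii)) * _
    rw [sgn_add, barLs]
    ring

lemma prod_cDiag_mul (X : Matrix (Tup n (r + s)) (Tup n (r + s)) ℂ)
    (L : List (Fin (r + s))) (jj ii : Tup n (r + s)) :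
    (((L.map (fun b => PsiMat n (cDiagW r s b))).reverse.prod) * X) jj ii
      = sgn (expB r L jj) * X (barRs L jj) ii := by
  induction L generalizing X with
  | nil => simp [expB, barRs, sgn_zero]
  | cons b L ih =>
    rw [List.map_cons, List.reverse_cons, List.prod_append, List.prod_singleton,
      Matrix.mul_assoc, ih, cDiag_mul]
    show _ = sgn (expB r L jj + eC r (barRs L jj) b) * _
    rw [sgn_add, barRs]
    ring

lemma barRs_apply_not_mem {k : ℕ} :
    ∀ (L : List (Fin k)) {q : Fin k}, q ∉ L → ∀ (x : Tup n k), barRs L x q = x q := by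
  intro L
  induction L with
  | nil => intro q _ x; rfl
  | cons b L ih =>
    intro q hq x
    rw [barRs, barAt_apply, if_neg (by rintro rfl; exact hq List.mem_cons_self)]
    exact ih (fun h => hq (List.mem_cons_of_mem b h)) x

lemma barLs_eq_of_nodup {k : ℕ} (L : List (Fin k)) (h : L.Nodup) (x : Tup n k) :
    barLs L x = fun p => if p ∈ L then bar (x p) else x p := by
  induction L generalizing x with
  | nil => simp [barLs]
  | cons a L ih =>
    rw [barLs, ih (List.nodup_cons.mp h).2]
    funext p
    rcases eq_or_ne p a with rfl | hne
    · rw [if_neg (List.nodup_cons.mp h).1, if_pos (List.mem_cons_self (a := p) (l := L)),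
        barAt_apply, if_pos rfl]
    · rw [barAt_apply, if_neg hne]
      by_cases hp : p ∈ L
      · simp [hp, List.mem_cons, hne]
      · simp [hp, List.mem_cons, hne]

lemma barRs_eq_of_nodup {k : ℕ} (L : List (Fin k)) (h : L.Nodup) (x : Tup n k) :
    barRs L x = fun p => if p ∈ L then bar (x p) else x p := by
  induction L generalizing x with
  | nil => simp [barRs]
  | cons a L ih =>
    rw [barRs, ih (List.nodup_cons.mp h).2]
    funext p
    rcases eq_or_ne p a with rfl | hne
    · rw [barAt_apply, if_pos rfl, if_neg (List.nodup_cons.mp h).1,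
        if_pos (List.mem_cons_self (a := p) (l := L))]
    · rw [barAt_apply, if_neg hne]
      by_cases hp : p ∈ L
      · simp [hp, List.mem_cons, hne]
      · simp [hp, List.mem_cons, hne]

lemma parBelow_congr' {k : ℕ} {x y : Tup n k} {c : Fin k}
    (h : ∀ q, q ≤ c → x q = y q) : parUpTo x c = parUpTo y c := by
  unfold parUpTo
  rw [parBelow_congr (fun q hq => h q (le_of_lt hq)), h c (le_refl c)]

lemma expB_eq (L : List (Fin (r + s))) (hL : List.Pairwise (· < ·) L)
    (x : Tup n (r + s)) :
    expB r L x = (L.map (fun b => eC r x b)).sum := by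
  induction L with
  | nil => rfl
  | cons b L ih =>
    rw [expB, List.map_cons, List.sum_cons, ih (List.pairwise_cons.mp hL).2]
    have hb : eC r (barRs L x) b = eC r x b := by
      have hval : ∀ q, q ≤ b → barRs L x q = x q := by
        intro q hq
        apply barRs_apply_not_mem
        intro hqL
        exact absurd ((List.pairwise_cons.mp hL).1 q hqL) (not_lt.mpr hq)
      unfold eC
      split
      · exact parBelow_congr' hval
      · exact parBelow_congr (fun q hq => hval q (le_of_lt hq))
    rw [hb]
    ring

lemma expA_shift (L : List (Fin (r + s))) {q : Fin (r + s)} (h : ∀ c ∈ L, q < c)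
    (x : Tup n (r + s)) :
    expA r L (barAt q x) = expA r L x + L.length := by
  induction L generalizing x with
  | nil => simp [expA]
  | cons c L ih =>
    have hqc : q < c := h c (List.mem_cons_self (a := c) (l := L))
    have hcq : c ≠ q := ne_of_gt hqc
    have hcomm : barAt c (barAt q x) = barAt q (barAt c x) := by
      funext p
      simp only [barAt_apply, if_neg hcq, if_neg hcq.symm]
      rcases eq_or_ne p c with rfl | h1 <;> rcases eq_or_ne p q with rfl | h2 <;> simp_all
    rw [expA, expA, hcomm, eC_barAt_of_lt hqc,
      ih (fun c' hc' => h c' (List.mem_cons_of_mem c hc')) (barAt c x)]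
    simp only [List.length_cons]
    push_cast
    ring

lemma expA_eq (L : List (Fin (r + s))) (hL : List.Pairwise (· < ·) L)
    (hr : ∀ a ∈ L, a.val < r) (x : Tup n (r + s)) :
    expA r L x = ((L.length * (L.length + 1) / 2 : ℕ) : ZMod 2)
      + (L.map (fun a => parUpTo x a)).sum := by
  induction L generalizing x with
  | nil => simp [expA]
  | cons a L ih =>
    rw [expA, eC_barAt_self (hr a (List.mem_cons_self (a := a) (l := L))),
      expA_shift L (List.pairwise_cons.mp hL).1,
      ih (List.pairwise_cons.mp hL).2
        (fun c hc => hr c (List.mem_cons_of_mem a hc))]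
    have hnat : (L.length + 1) * (L.length + 1 + 1) / 2
        = L.length * (L.length + 1) / 2 + (L.length + 1) := by
      have hrw : (L.length + 1) * (L.length + 1 + 1)
          = L.length * (L.length + 1) + (L.length + 1) * 2 := by ring
      rw [hrw, Nat.add_mul_div_right _ _ (by norm_num)]
    have heC : eC r x a = parUpTo x a := by
      unfold eC
      rw [if_pos (hr a (List.mem_cons_self (a := a) (l := L)))]
    rw [List.map_cons, List.sum_cons, List.length_cons, hnat, heC]
    push_cast
    ring

end Prods

section Heart

variable {n r s : ℕ}

lemma mem_botList (d : WDiag r s) {p : Fin (r + s)} :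
    p ∈ botList d ↔
      ((d.π (false, p)).1 = false ∧ p < (d.π (false, p)).2 ∧ d.mrk (false, p) = true) := by
  unfold botList
  rw [List.mem_filter]
  simp [List.mem_finRange, and_assoc]

lemma mem_topList (d : WDiag r s) {p : Fin (r + s)} :
    p ∈ topList d ↔
      (d.mrk (true, p) = true ∧ ((d.π (true, p)).1 = false ∨ p < (d.π (true, p)).2)) := by
  unfold topList
  rw [List.mem_filter]
  simp [List.mem_finRange]

lemma isGood_bot (d : WDiag r s) (p : Fin (r + s)) :
    isGoodW d (false, p) = true ↔
      ((d.π (false, p)).1 = false ∧ p < (d.π (false, p)).2) := by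
  cases hb : (d.π (false, p)).1
  · simp [isGoodW, hb]
  · simp [isGoodW, hb]

lemma isGood_top (d : WDiag r s) (p : Fin (r + s)) :
    isGoodW d (true, p) = true ↔
      ((d.π (true, p)).1 = false ∨ p < (d.π (true, p)).2) := by
  cases hb : (d.π (true, p)).1
  · simp [isGoodW, hb]
  · simp [isGoodW, hb]

lemma mem_botList_iff_good (d : WDiag r s) {p : Fin (r + s)} :
    p ∈ botList d ↔ (isGoodW d (false, p) = true ∧ d.mrk (false, p) = true) := by
  rw [mem_botList, isGood_bot]
  tauto

lemma mem_topList_iff_good (d : WDiag r s) {p : Fin (r + s)} :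
    p ∈ topList d ↔ (isGoodW d (true, p) = true ∧ d.mrk (true, p) = true) := by
  rw [mem_topList, isGood_top]
  tauto

lemma botList_lt_r (d : WDiag r s) {p : Fin (r + s)} (hp : p ∈ botList d) :
    p.val < r := by
  rw [mem_botList] at hp
  have hw : ¬(((d.π (false, p)).2.val < r) ↔ (p.val < r)) := (d.wall (false, p)).mp hp.1
  have hlt : p.val < (d.π (false, p)).2.val := hp.2.1
  by_contra hge
  exact hw (by constructor <;> intro <;> omega)

lemma botList_sorted (d : WDiag r s) : List.Pairwise (· < ·) (botList d) :=
  (List.pairwise_lt_finRange _).filter _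

lemma topList_sorted (d : WDiag r s) : List.Pairwise (· < ·) (topList d) :=
  (List.pairwise_lt_finRange _).filter _

lemma botList_nodup (d : WDiag r s) : (botList d).Nodup :=
  (botList_sorted d).imp (fun h => ne_of_lt h)

lemma topList_nodup (d : WDiag r s) : (topList d).Nodup :=
  (topList_sorted d).imp (fun h => ne_of_lt h)

lemma not_isGood_pi (d : WDiag r s) {g : Bool × Fin (r + s)}
    (h : isGoodW d g = true) : isGoodW d (d.π g) = false := by
  have hinv := d.invol g
  unfold isGoodW at h ⊢
  by_cases hh : (d.π g).1 = g.1
  · rw [if_pos hh] at h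
    rw [if_pos (by rw [hinv, hh])]
    rw [hinv]
    simp only [decide_eq_true_eq] at h
    simp only [decide_eq_false_iff_not]
    exact lt_asymm h
  · rw [if_neg hh] at h
    rw [if_neg (by rw [hinv]; intro hc; exact hh hc.symm)]
    cases hb : (d.π g).1
    · rfl
    · exact absurd (by rw [hb, h]) hh

lemma lab_barred (d : WDiag r s) (ii jj : Tup n (r + s)) (v : Bool × Fin (r + s)) :
    lab (fun p => if p ∈ botList d then bar (ii p) else ii p)
        (fun p => if p ∈ topList d then bar (jj p) else jj p) v
      = if isGoodW d v = true ∧ d.mrk v = true then bar (lab ii jj v)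
        else lab ii jj v := by
  rcases v with ⟨b, p⟩
  cases b
  · show (if p ∈ botList d then bar (ii p) else ii p) = _
    have hl : lab ii jj (false, p) = ii p := rfl
    rw [hl]
    simp only [mem_botList_iff_good d]
  · show (if p ∈ topList d then bar (jj p) else jj p) = _
    have hl : lab ii jj (true, p) = jj p := rfl
    rw [hl]
    simp only [mem_topList_iff_good d]

lemma botList_unmark (d : WDiag r s) : botList (unmarkD d) = [] := by
  unfold botList
  rw [List.filter_eq_nil_iff]
  intro p _
  simp [unmarkD]

lemma topList_unmark (d : WDiag r s) : topList (unmarkD d) = [] := by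
  unfold topList
  rw [List.filter_eq_nil_iff]
  intro p _
  simp [unmarkD]

lemma wtW_unmark (d : WDiag r s) (ii jj : Tup n (r + s)) :
    wtW d ii jj = sgn (botExpW d ii + topExpW d jj) *
      wtW (unmarkD d)
        (fun p => if p ∈ botList d then bar (ii p) else ii p)
        (fun p => if p ∈ topList d then bar (jj p) else jj p) := by
  set iB : Tup n (r + s) := fun p => if p ∈ botList d then bar (ii p) else ii p with hiB
  set jB : Tup n (r + s) := fun p => if p ∈ topList d then bar (jj p) else jj p with hjB
  have hlab_pi : ∀ g : Bool × Fin (r + s), isGoodW d g = true →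
      lab iB jB (d.π g) = lab ii jj (d.π g) := by
    intro g hg
    rw [hiB, hjB, lab_barred d ii jj (d.π g), if_neg]
    intro hc
    rw [not_isGood_pi d hg] at hc
    exact absurd hc.1 (by simp)
  have hP : (∏ g ∈ Finset.univ.filter (fun v => isGoodW (unmarkD d) v),
      (if (unmarkD d).mrk g then
        (if lab iB jB ((unmarkD d).π g) = bar (lab iB jB g) then (1 : ℂ) else 0)
       else (if lab iB jB ((unmarkD d).π g) = lab iB jB g then (1 : ℂ) else 0)))
      = (∏ g ∈ Finset.univ.filter (fun v => isGoodW d v),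
      (if d.mrk g then
        (if lab ii jj (d.π g) = bar (lab ii jj g) then (1 : ℂ) else 0)
       else (if lab ii jj (d.π g) = lab ii jj g then (1 : ℂ) else 0))) := by
    apply Finset.prod_congr rfl
    intro g hg
    have hgood : isGoodW d g = true := by
      have := (Finset.mem_filter.mp hg).2
      exact this
    have hmrk' : (unmarkD d).mrk g = false := rfl
    have hpi' : (unmarkD d).π = d.π := rfl
    rw [hmrk', hpi', if_neg (by simp)]
    rw [hlab_pi g hgood, hiB, hjB, lab_barred d ii jj g]
    cases hm : d.mrk g
    · simp [hgood]
    · simp [hgood]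
  have hH : hExpW (unmarkD d) iB = hExpW d ii := by
    unfold hExpW
    apply Finset.sum_congr rfl
    intro g hg
    obtain ⟨hgood, hgb, hpb⟩ := (Finset.mem_filter.mp hg).2
    have hgood' : isGoodW d g = true := hgood
    have hpb' : (d.π g).1 = false := hpb
    congr 1
    show iB (d.π g).2 = ii (d.π g).2
    rw [hiB]
    show (if (d.π g).2 ∈ botList d then bar (ii (d.π g).2) else ii (d.π g).2) = _
    rw [if_neg]
    intro hmem
    have hmg := (mem_botList_iff_good d).mp hmem
    have hpi : ((false : Bool), (d.π g).2) = d.π g := by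
      rw [← hpb']
    rw [hpi] at hmg
    rw [not_isGood_pi d hgood'] at hmg
    exact absurd hmg.1 (by simp)
  have hpe : ∀ g, isGoodW d g = true →
      parE (unmarkD d) iB jB g = parE d ii jj g := by
    intro g hg
    show par (lab iB jB (d.π g)) = par (lab ii jj (d.π g))
    rw [hlab_pi g hg]
  have hC : crossExpW (unmarkD d) iB jB = crossExpW d ii jj := by
    unfold crossExpW
    apply Finset.sum_congr rfl
    intro g2 hg2
    apply Finset.sum_congr rfl
    intro g1 hg1
    have hgood2 : isGoodW d g2 = true := (Finset.mem_filter.mp hg2).2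
    have hgood1 : isGoodW d g1 = true := ((Finset.mem_filter.mp hg1).2).1
    have hcb : crossB (unmarkD d) = crossB d := rfl
    rw [hcb, hpe g1 hgood1, hpe g2 hgood2]
  have hB0 : botExpW (unmarkD d) iB = 0 := by
    unfold botExpW
    rw [botList_unmark]
    simp
  have hT0 : topExpW (unmarkD d) jB = 0 := by
    unfold topExpW
    rw [topList_unmark]
    simp
  unfold wtW
  rw [hP, hH, hC, hB0, hT0, add_zero, add_zero,
    sgn_add (hExpW d ii + crossExpW d ii jj + botExpW d ii) (topExpW d jj),
    sgn_add (hExpW d ii + crossExpW d ii jj) (botExpW d ii),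
    sgn_add (botExpW d ii) (topExpW d jj)]
  ring

end Heart

lemma key_matrix (n r s : ℕ) (d : WDiag r s) :
    PsiMat n d =
      ((topList d).map (fun b => PsiMat n (cDiagW r s b))).reverse.prod *
        (PsiMat n (unmarkD d) *
          ((botList d).map (fun a => PsiMat n (cDiagW r s a))).reverse.prod) := by
  funext jj ii
  rw [prod_cDiag_mul, mul_prod_cDiag]
  show wtW d ii jj = _
  rw [wtW_unmark d ii jj,
    barLs_eq_of_nodup _ (botList_nodup d), barRs_eq_of_nodup _ (topList_nodup d)]
  have hA : expA r (botList d) ii = botExpW d ii := by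
    rw [expA_eq _ (botList_sorted d) (fun a ha => botList_lt_r d ha)]
    rfl
  have hB : expB r (topList d) jj = topExpW d jj := by
    rw [expB_eq _ (topList_sorted d)]
    rfl
  have hPM : PsiMat n (unmarkD d)
      (fun p => if p ∈ topList d then bar (jj p) else jj p)
      (fun p => if p ∈ botList d then bar (ii p) else ii p)
    = wtW (unmarkD d)
      (fun p => if p ∈ botList d then bar (ii p) else ii p)
      (fun p => if p ∈ topList d then bar (jj p) else jj p) := rfl
  rw [hA, hB, hPM, sgn_add]
  ring

/-- Lemma 3.2: for an `(r,s)`-superdiagram `d` with bottom-row marked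
horizontal left vertices `a_1 < ⋯ < a_p`, top-row marked good vertices
`b_1 < ⋯ < b_q`, and underlying unmarked diagram `d'`, one has, in
`End_ℂ(V^{⊗r} ⊗ W^{⊗s})^{op}`,
`Ψ(d) = Ψ(c_{a_1}) ⋯ Ψ(c_{a_p}) Ψ(d') Ψ(c_{b_1}) ⋯ Ψ(c_{b_q})`. -/
theorem Psi_decomposition (n r s : ℕ) (d : WDiag r s) :
    MulOpposite.op (PsiMat n d) =
      (((botList d).map (fun a => MulOpposite.op (PsiMat n (cDiagW r s a)))).prod) *
        MulOpposite.op (PsiMat n (unmarkD d)) *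
        (((topList d).map (fun b => MulOpposite.op (PsiMat n (cDiagW r s b)))).prod) := by
  have h1 : ((botList d).map (fun a => MulOpposite.op (PsiMat n (cDiagW r s a)))).prod
      = MulOpposite.op (((botList d).map (fun a => PsiMat n (cDiagW r s a))).reverse.prod) := by
    rw [MulOpposite.op_list_prod, List.map_reverse, List.reverse_reverse, List.map_map]
    rfl
  have h2 : ((topList d).map (fun b => MulOpposite.op (PsiMat n (cDiagW r s b)))).prod
      = MulOpposite.op (((topList d).map (fun b => PsiMat n (cDiagW r s b))).reverse.prod) := by
    rw [MulOpposite.op_list_prod, List.map_reverse, List.reverse_reverse, List.map_map]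
    rfl
  rw [h1, h2, key_matrix n r s d, MulOpposite.op_mul, MulOpposite.op_mul]

end WalledBS
end
end

section
/- Let A be an associative C-algebra containing elements s_{r-1}, s_{r+1}, e satisfying s_{r-1}^2 = 1, s_{r+1}^2 = 1, s_{r-1} s_{r+1} = s_{r+1} s_{r-1}, e = e s_{r-1} e = e s_{r+1} e, and s_{r-1} s_{r+1} e s_{r+1} s_{r-1} e = e s_{r-1} s_{r+1} e s_{r+1} s_{r-1}. Then s_{r-1} s_{r+1} e s_{r+1} s_{r-1} e = e s_{r-1} s_{r+1} e. -/
/-!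
STATEMENT 15: In any associative `ℂ`-algebra containing elements `s_{r-1}, s_{r+1}, e`
satisfying `s_{r-1}^2 = 1`, `s_{r+1}^2 = 1`, `s_{r-1} s_{r+1} = s_{r+1} s_{r-1}`,
`e = e s_{r-1} e = e s_{r+1} e` and
`s_{r-1} s_{r+1} e s_{r+1} s_{r-1} e = e s_{r-1} s_{r+1} e s_{r+1} s_{r-1}`, one has
`s_{r-1} s_{r+1} e s_{r+1} s_{r-1} e = e s_{r-1} s_{r+1} e`.
-/

theorem walledBrauer_relation_consequence
    (A : Type*) [Ring A] [Algebra ℂ A] (s₁ s₂ e : A)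
    (h1 : s₁ ^ 2 = 1) (h2 : s₂ ^ 2 = 1)
    (h3 : s₁ * s₂ = s₂ * s₁)
    (h4 : e = e * s₁ * e) (h5 : e = e * s₂ * e)
    (h6 : s₁ * s₂ * e * s₂ * s₁ * e = e * s₁ * s₂ * e * s₂ * s₁) :
    s₁ * s₂ * e * s₂ * s₁ * e = e * s₁ * s₂ * e := by
  have hs1 : s₁ * s₁ = 1 := by rw [← pow_two]; exact h1
  have hs2 : s₂ * s₂ = 1 := by rw [← pow_two]; exact h2
  have k1 : ∀ x : A, s₁ * (s₁ * x) = x := fun x => by rw [← mul_assoc, hs1, one_mul]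
  have k2 : ∀ x : A, s₂ * (s₂ * x) = x := fun x => by rw [← mul_assoc, hs2, one_mul]
  have hcc : (s₁ * s₂) * (s₁ * s₂) = 1 := by
    calc (s₁ * s₂) * (s₁ * s₂) = s₁ * (s₂ * (s₁ * s₂)) := by simp only [mul_assoc]
      _ = s₁ * (s₁ * (s₂ * s₂)) := by rw [← mul_assoc s₂ s₁ s₂, ← h3, mul_assoc]
      _ = 1 := by rw [hs2, mul_one, hs1]
  -- Step 1: X * (s₁s₂) = Y  where X = s₁s₂es₂s₁e, Y = es₁s₂e
  have hXc : (s₁ * s₂ * e * s₂ * s₁ * e) * (s₁ * s₂) = e * s₁ * s₂ * e := by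
    rw [h6]
    calc (e * s₁ * s₂ * e * s₂ * s₁) * (s₁ * s₂)
        = e * (s₁ * (s₂ * (e * (s₂ * (s₁ * (s₁ * s₂)))))) := by simp only [mul_assoc]
      _ = e * (s₁ * (s₂ * e)) := by rw [k1, hs2, mul_one]
      _ = e * s₁ * s₂ * e := by simp only [mul_assoc]
  -- Step 2: (s₁s₂) * X = Y
  have hcX : s₁ * (s₂ * (s₁ * s₂ * e * s₂ * s₁ * e)) = e * s₁ * s₂ * e := by
    calc s₁ * (s₂ * (s₁ * s₂ * e * s₂ * s₁ * e))
        = s₁ * (s₂ * (s₁ * (s₂ * (e * (s₂ * (s₁ * e)))))) := by simp only [mul_assoc]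
      _ = s₂ * (s₁ * (s₁ * (s₂ * (e * (s₂ * (s₁ * e)))))) := by
          rw [← mul_assoc s₁ s₂, h3, mul_assoc]
      _ = s₂ * (s₂ * (e * (s₂ * (s₁ * e)))) := by rw [k1]
      _ = e * (s₂ * (s₁ * e)) := by rw [k2]
      _ = e * ((s₂ * s₁) * e) := by rw [mul_assoc]
      _ = e * ((s₁ * s₂) * e) := by rw [h3]
      _ = e * s₁ * s₂ * e := by simp only [mul_assoc]
  -- Absorption: e s₁ Y = Y and e s₂ Y = Y
  have hY1 : e * (s₁ * (e * s₁ * s₂ * e)) = e * s₁ * s₂ * e := by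
    calc e * (s₁ * (e * s₁ * s₂ * e)) = (e * s₁ * e) * s₁ * s₂ * e := by
          simp only [mul_assoc]
      _ = e * s₁ * s₂ * e := by rw [← h4]
  have hY2 : e * (s₂ * (e * s₁ * s₂ * e)) = e * s₁ * s₂ * e := by
    calc e * (s₂ * (e * s₁ * s₂ * e)) = (e * s₂ * e) * s₁ * s₂ * e := by
          simp only [mul_assoc]
      _ = e * s₁ * s₂ * e := by rw [← h5]
  -- Y = e * s₂ * X
  have hYX : e * s₁ * s₂ * e = e * (s₂ * (s₁ * s₂ * e * s₂ * s₁ * e)) := by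
    calc e * s₁ * s₂ * e = e * (s₁ * (e * s₁ * s₂ * e)) := hY1.symm
      _ = e * (s₁ * (s₁ * (s₂ * (s₁ * s₂ * e * s₂ * s₁ * e)))) := by rw [hcX]
      _ = e * (s₂ * (s₁ * s₂ * e * s₂ * s₁ * e)) := by rw [k1]
  -- Final chain
  calc s₁ * s₂ * e * s₂ * s₁ * e
      = (s₁ * s₂ * e * s₂ * s₁ * e) * ((s₁ * s₂) * (s₁ * s₂)) := by rw [hcc, mul_one]
    _ = ((s₁ * s₂ * e * s₂ * s₁ * e) * (s₁ * s₂)) * (s₁ * s₂) := by simp only [mul_assoc]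
    _ = (e * s₁ * s₂ * e) * (s₁ * s₂) := by rw [hXc]
    _ = (e * (s₂ * (s₁ * s₂ * e * s₂ * s₁ * e))) * (s₁ * s₂) := by rw [← hYX]
    _ = e * (s₂ * ((s₁ * s₂ * e * s₂ * s₁ * e) * (s₁ * s₂))) := by simp only [mul_assoc]
    _ = e * (s₂ * (e * s₁ * s₂ * e)) := by rw [hXc]
    _ = e * s₁ * s₂ * e := hY2
end

section
/- Let A be an associative C-algebra containing elements s_{r-1}, s_{r+1}, e satisfying s_{r-1}^2 = 1, s_{r+1}^2 = 1, s_{r-1} s_{r+1} = s_{r+1} s_{r-1}, e = e s_{r-1} e = e s_{r+1} e, and s_{r-1} s_{r+1} e s_{r+1} s_{r-1} e = e s_{r-1} s_{r+1} e s_{r+1} s_{r-1}, and set e' = s_{r-1} s_{r+1} e s_{r+1} s_{r-1}. Then e e' s_{r-1} s_{r+1} = e e' and e e' = e' e. -/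
/-!
STATEMENT 16: In any associative `ℂ`-algebra containing elements `s_{r-1}, s_{r+1}, e`
satisfying the relations of the presentation of the walled Brauer superalgebra, with
`e' = s_{r-1} s_{r+1} e s_{r+1} s_{r-1}`, one has
`e e' s_{r-1} s_{r+1} = e e'` and `e e' = e' e`.
-/

theorem walledBrauer_ee'_identities
    (A : Type*) [Ring A] [Algebra ℂ A] (s₁ s₂ e : A)
    (h1 : s₁ ^ 2 = 1) (h2 : s₂ ^ 2 = 1)
    (h3 : s₁ * s₂ = s₂ * s₁)
    (h4 : e = e * s₁ * e) (h5 : e = e * s₂ * e)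
    (h6 : s₁ * s₂ * e * s₂ * s₁ * e = e * s₁ * s₂ * e * s₂ * s₁)
    (e' : A) (he' : e' = s₁ * s₂ * e * s₂ * s₁) :
    e * e' * s₁ * s₂ = e * e' ∧ e * e' = e' * e := by
  have p1 : s₁ * s₁ = 1 := by rw [← sq]; exact h1
  have p2 : s₂ * s₂ = 1 := by rw [← sq]; exact h2
  have q1 : ∀ x : A, s₁ * (s₁ * x) = x := fun x => by rw [← mul_assoc, p1, one_mul]
  have r1 : ∀ x : A, e * (s₁ * (e * x)) = e * x := fun x => by
    rw [← mul_assoc, ← mul_assoc, ← h4]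
  have r2 : ∀ x : A, e * (s₂ * (e * x)) = e * x := fun x => by
    rw [← mul_assoc, ← mul_assoc, ← h5]
  have h3' : ∀ x : A, s₁ * (s₂ * x) = s₂ * (s₁ * x) := fun x => by
    rw [← mul_assoc, h3, mul_assoc]
  have h6' := congrArg (fun x => e * (s₁ * x)) h6
  simp only [mul_assoc] at h6'
  rw [q1, r2, r1] at h6'
  -- h6' : e * (s₂ * (s₁ * e)) = e * (s₁ * (s₂ * (e * (s₂ * s₁))))
  subst he'
  have h6r : s₁ * (s₂ * (e * (s₂ * (s₁ * e)))) = e * (s₁ * (s₂ * (e * (s₂ * s₁)))) := by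
    simpa only [mul_assoc] using h6
  constructor
  · simp only [mul_assoc]
    rw [q1, p2, mul_one, h3']
    exact h6'
  · simp only [mul_assoc]
    exact h6r.symm
end
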